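/- arXiv:2207.01789 — 9 statements merged into one kernel-verified Lean document; each statement's English description precedes it below -/
import Mathlib

section
/- Let x ∈ ℝⁿ with nonnegative entries satisfy 1ᵀx ≤ ‖x‖². Then 1ᵀ(I − xxᵀ/‖x‖²)1 ≥ ‖(1 − x)₊‖², i.e., n − (1ᵀx)²/‖x‖² ≥ Σᵢ (max(1 − xᵢ, 0))². -/
/-- For `x ∈ ℝⁿ` with nonnegative entries, `x ≠ 0`, satisfying
`1ᵀx ≤ ‖x‖²`, we have `1ᵀ(I − xxᵀ/‖x‖²)1 = n − (1ᵀx)²/‖x‖² ≥ ‖(1 − x)₊‖²`. -/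
theorem ones_quadratic_ge_pos_part (n : ℕ) (x : Fin n → ℝ)
    (hx : ∀ i, 0 ≤ x i) (hx0 : x ≠ 0)
    (h : ∑ i, x i ≤ ∑ i, (x i) ^ 2) :
    ∑ i, (max (1 - x i) 0) ^ 2 ≤ (n : ℝ) - (∑ i, x i) ^ 2 / (∑ i, (x i) ^ 2) := by
  set s := ∑ i, x i with hs
  set q := ∑ i, (x i) ^ 2 with hq
  have hqpos : 0 < q := by
    obtain ⟨i, hi⟩ := Function.ne_iff.mp hx0
    refine Finset.sum_pos' (fun j _ => sq_nonneg _) ⟨i, Finset.mem_univ i, ?_⟩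
    have : x i ≠ 0 := hi
    positivity
  have hspos : 0 ≤ s := Finset.sum_nonneg fun i _ => hx i
  have ht0 : 0 ≤ s / q := div_nonneg hspos hqpos.le
  have ht1 : s / q ≤ 1 := by rw [div_le_one hqpos]; exact h
  have key : ∑ i, (1 - (s / q) * x i) ^ 2 = (n : ℝ) - s ^ 2 / q := by
    have expand : ∀ i ∈ Finset.univ, (1 - (s / q) * x i) ^ 2
        = 1 - 2 * (s / q) * x i + (s / q) ^ 2 * (x i) ^ 2 := fun i _ => by ring
    rw [Finset.sum_congr rfl expand]
    simp only [Finset.sum_add_distrib, Finset.sum_sub_distrib,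
      ← Finset.mul_sum, Finset.sum_const, Finset.card_univ, Fintype.card_fin,
      nsmul_eq_mul, mul_one]
    rw [← hs, ← hq]
    field_simp
    ring
  rw [← key]
  apply Finset.sum_le_sum
  intro i _
  rcases le_or_gt (x i) 1 with hle | hgt
  · rw [max_eq_left (by linarith)]
    have htx : (s / q) * x i ≤ x i := by
      have := hx i
      nlinarith
    nlinarith [hx i, mul_nonneg ht0 (hx i)]
  · rw [max_eq_right (by linarith)]
    simpa using sq_nonneg (1 - s / q * x i)
end

section
/- Let s, d ∈ ℝ₊ⁿ (entrywise nonnegative vectors) and let s_lb ≥ 0 satisfy sᵢ ≥ s_lb for all i. If s_lb·(1ᵀd) ≤ ‖d‖², then ‖s‖² − ‖(s − d)₊‖² ≥ s_lb²·(1ᵀd)²/‖d‖². If instead s_lb·(1ᵀd) ≥ ‖d‖², then ‖s‖² − ‖(s − d)₊‖² ≥ ‖d‖². -/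
/-- Lemma `keyclaim`: for entrywise nonnegative vectors `s, d` with
`sᵢ ≥ s_lb ≥ 0`, a two-case lower bound on `‖s‖² − ‖(s − d)₊‖²`. -/
theorem keyclaim (n : ℕ) (s d : Fin n → ℝ) (slb : ℝ)
    (hs : ∀ i, 0 ≤ s i) (hd : ∀ i, 0 ≤ d i)
    (hslb : 0 ≤ slb) (hle : ∀ i, slb ≤ s i) :
    (d ≠ 0 → slb * (∑ i, d i) ≤ ∑ i, (d i) ^ 2 →
      slb ^ 2 * (∑ i, d i) ^ 2 / (∑ i, (d i) ^ 2) ≤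
        ∑ i, (s i) ^ 2 - ∑ i, (max (s i - d i) 0) ^ 2) ∧
    ((∑ i, (d i) ^ 2) ≤ slb * (∑ i, d i) →
      ∑ i, (d i) ^ 2 ≤ ∑ i, (s i) ^ 2 - ∑ i, (max (s i - d i) 0) ^ 2) := by
  have key : ∀ t : ℝ, 0 ≤ t → t ≤ 1 →
      2*t*slb*(∑ i, d i) - t^2*(∑ i, (d i)^2) ≤
        ∑ i, (s i)^2 - ∑ i, (max (s i - d i) 0)^2 := by
    intro t ht ht1
    have h1 : ∑ i, (s i)^2 - ∑ i, (max (s i - d i) 0)^2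
        = ∑ i, ((s i)^2 - (max (s i - d i) 0)^2) := by
      rw [Finset.sum_sub_distrib]
    have h2 : 2*t*slb*(∑ i, d i) - t^2*(∑ i, (d i)^2)
        = ∑ i, (2*t*slb*(d i) - t^2*(d i)^2) := by
      rw [Finset.sum_sub_distrib, Finset.mul_sum, Finset.mul_sum]
    rw [h1, h2]
    apply Finset.sum_le_sum
    intro i _
    rcases le_or_gt (d i) (s i) with h | h
    · rw [max_eq_left (by linarith)]
      have e1 : 0 ≤ (1 - t) * d i * (2 * s i - (1 + t) * d i) := by
        apply mul_nonneg (mul_nonneg (by linarith) (hd i))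
        nlinarith [hd i]
      have e2 : 0 ≤ t * d i * (s i - slb) :=
        mul_nonneg (mul_nonneg ht (hd i)) (by linarith [hle i])
      nlinarith
    · rw [max_eq_right (by linarith)]
      nlinarith [sq_nonneg (slb - t * d i), hle i, hslb]
  constructor
  · intro hne hle2
    have hpos : 0 < ∑ i, (d i) ^ 2 := by
      obtain ⟨i, hi⟩ := Function.ne_iff.mp hne
      apply Finset.sum_pos' (fun j _ => sq_nonneg _)
      refine ⟨i, Finset.mem_univ i, pow_pos ?_ 2⟩
      exact lt_of_le_of_ne (hd i) (fun h => hi h.symm)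
    set D := ∑ i, (d i) ^ 2 with hD
    set t := slb * (∑ i, d i) / D with htdef
    have ht0 : 0 ≤ t := by
      apply div_nonneg _ hpos.le
      exact mul_nonneg hslb (Finset.sum_nonneg fun i _ => hd i)
    have ht1 : t ≤ 1 := (div_le_one hpos).mpr hle2
    have hk := key t ht0 ht1
    have heq : 2*t*slb*(∑ i, d i) - t^2*D = slb ^ 2 * (∑ i, d i) ^ 2 / D := by
      rw [htdef]
      field_simp
      ring
    linarith
  · intro hge
    have hk := key 1 zero_le_one le_rfl
    nlinarith
end

section
/- (Regularized Eckart–Young) Let A be an n×n positive semidefinite symmetric matrix with eigenvalues s₁ ≥ ⋯ ≥ sₙ ≥ 0 and orthonormal eigenvectors u₁,…,uₙ, and let B be an r×r positive semidefinite symmetric matrix (r ≤ n) with eigenvalues 0 ≤ d₁ ≤ ⋯ ≤ d_r and orthonormal eigenvectors v₁,…,v_r. Then the minimum over Y ∈ ℝ^{n×r} of ‖A − YYᵀ‖_F² + 2⟨B, YᵀY⟩ equals Σᵢ₌₁ⁿ sᵢ² − Σᵢ₌₁ʳ (max(sᵢ − dᵢ, 0))², and is attained by Y* = Σᵢ₌₁ʳ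 uᵢvᵢᵀ·√(max(sᵢ − dᵢ, 0)). -/
open Matrix Finset

/-- Squared Frobenius norm. -/
noncomputable def frob2 {m k : ℕ} (M : Matrix (Fin m) (Fin k) ℝ) : ℝ :=
  ∑ i, ∑ j, (M i j) ^ 2

/-- Frobenius inner product `⟨A, B⟩ = tr(AᵀB)`. -/
noncomputable def fip {m k : ℕ} (A B : Matrix (Fin m) (Fin k) ℝ) : ℝ :=
  ∑ i, ∑ j, A i j * B i j


lemma rearrange_upper {r : ℕ} (ν ρ : Fin r → ℝ) (hν : Antitone ν) (hν0 : ∀ l, 0 ≤ ν l)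
    (hρ0 : ∀ l, 0 ≤ ρ l) (hρ1 : ∀ l, ρ l ≤ 1) (F : Finset (Fin r))
    (hF : ∀ ⦃a b : Fin r⦄, a ≤ b → b ∈ F → a ∈ F)
    (hsum : ∑ l, ρ l ≤ (F.card : ℝ)) :
    ∑ l, ν l * ρ l ≤ ∑ l ∈ F, ν l := by
  by_cases hFu : F = univ
  · subst hFu
    exact Finset.sum_le_sum fun l _ => by nlinarith [hν0 l, hρ1 l, hρ0 l]
  · have hne : Fᶜ.Nonempty := by
      rw [← Finset.card_pos, Finset.card_compl]
      have := (Finset.card_lt_iff_ne_univ F).2 hFu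
      omega
    set m₀ := Fᶜ.min' hne with hm₀
    have hm₀F : m₀ ∉ F := by
      have := Finset.min'_mem _ hne; simpa using this
    set β := ν m₀ with hβ
    have hβ0 : 0 ≤ β := hν0 m₀
    have hinF : ∀ l ∈ F, β ≤ ν l := by
      intro l hl
      apply hν
      by_contra h
      push_neg at h
      exact hm₀F (hF h.le hl)
    have houtF : ∀ l ∉ F, ν l ≤ β := by
      intro l hl
      exact hν (Finset.min'_le _ _ (by simpa using hl))
    have key : ∀ l, ν l * ρ l ≤ β * ρ l + (if l ∈ F then ν l - β else 0) := by
      intro l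
      by_cases hl : l ∈ F
      · simp only [hl, if_true]
        nlinarith [hinF l hl, hρ1 l]
      · simp only [hl, if_false]
        nlinarith [houtF l hl, hρ0 l]
    calc ∑ l, ν l * ρ l ≤ ∑ l, (β * ρ l + (if l ∈ F then ν l - β else 0)) :=
          Finset.sum_le_sum fun l _ => key l
      _ = β * ∑ l, ρ l + (∑ l ∈ F, ν l - F.card * β) := by
          rw [Finset.sum_add_distrib, ← Finset.mul_sum]
          congr 1
          rw [Finset.sum_ite_mem, Finset.univ_inter, Finset.sum_sub_distrib]
          simp [mul_comm]
      _ ≤ ∑ l ∈ F, ν l := by nlinarith [hsum, hβ0]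

lemma rearrange_lower {r : ℕ} (d q : Fin r → ℝ) (hd : Monotone d)
    (hq0 : ∀ l, 0 ≤ q l) (hq1 : ∀ l, q l ≤ 1) (F : Finset (Fin r))
    (hF : ∀ ⦃a b : Fin r⦄, a ≤ b → b ∈ F → a ∈ F)
    (hsum : ∑ l, q l = (F.card : ℝ)) :
    ∑ l ∈ F, d l ≤ ∑ l, d l * q l := by
  by_cases hFu : F = univ
  · subst hFu
    have hall : ∀ l ∈ (univ : Finset (Fin r)), q l = 1 := by
      have h0 : ∑ l, (1 - q l) = 0 := by
        rw [Finset.sum_sub_distrib]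
        simp only [Finset.sum_const, Finset.card_univ, nsmul_eq_mul, mul_one]
        rw [hsum]; simp
      intro l hl
      have := (Finset.sum_eq_zero_iff_of_nonneg (fun l _ => by linarith [hq1 l])).1 h0 l hl
      linarith
    exact le_of_eq (Finset.sum_congr rfl fun l hl => by rw [hall l hl, mul_one])
  · have hne : Fᶜ.Nonempty := by
      rw [← Finset.card_pos, Finset.card_compl]
      have := (Finset.card_lt_iff_ne_univ F).2 hFu
      omega
    set m₀ := Fᶜ.min' hne with hm₀
    have hm₀F : m₀ ∉ F := by
      have := Finset.min'_mem _ hne; simpa using this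
    set β := d m₀ with hβ
    have hinF : ∀ l ∈ F, d l ≤ β := by
      intro l hl
      apply hd
      by_contra h
      push_neg at h
      exact hm₀F (hF h.le hl)
    have houtF : ∀ l ∉ F, β ≤ d l := by
      intro l hl
      exact hd (Finset.min'_le _ _ (by simpa using hl))
    have key : ∀ l, β * q l + (if l ∈ F then d l - β else 0) ≤ d l * q l := by
      intro l
      by_cases hl : l ∈ F
      · simp only [hl, if_true]
        nlinarith [hinF l hl, hq1 l]
      · simp only [hl, if_false]
        nlinarith [houtF l hl, hq0 l]
    calc ∑ l ∈ F, d l = β * ∑ l, q l + (∑ l ∈ F, d l - F.card * β) := by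
          rw [hsum]; ring
      _ = ∑ l, (β * q l + (if l ∈ F then d l - β else 0)) := by
          rw [Finset.sum_add_distrib, ← Finset.mul_sum]
          congr 1
          rw [Finset.sum_ite_mem, Finset.univ_inter, Finset.sum_sub_distrib]
          simp [mul_comm]
      _ ≤ ∑ l, d l * q l := Finset.sum_le_sum fun l _ => key l

lemma abel_compare {r : ℕ} (ν f g : Fin r → ℝ) (hν : Antitone ν) (hν0 : ∀ l, 0 ≤ ν l)
    (hfg : ∀ m : Fin r, ∑ l ∈ Iic m, f l ≤ ∑ l ∈ Iic m, g l) :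
    ∑ l, ν l * f l ≤ ∑ l, ν l * g l := by
  set νb : ℕ → ℝ := fun m => if h : m < r then ν ⟨m, h⟩ else 0 with hνb
  set τ : Fin r → ℝ := fun m => νb m.1 - νb (m.1 + 1) with hτ
  have hτ0 : ∀ m, 0 ≤ τ m := by
    intro m
    simp only [hτ, hνb]
    by_cases h : m.1 + 1 < r
    · simp only [m.2, h, dif_pos]
      have : (⟨m.1, m.2⟩ : Fin r) ≤ ⟨m.1 + 1, h⟩ := by simp [Fin.le_def]
      have := hν this
      simpa using this
    · simp only [m.2, h, dif_pos, dif_neg]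
      simpa using hν0 m
  have hid : ∀ l : Fin r, ν l = ∑ m ∈ Ici l, τ m := by
    intro l
    have hrpos : 0 < r := lt_of_le_of_lt (Nat.zero_le _) l.2
    have hIcc : Finset.Ico (l : ℕ) r = Finset.Icc (l : ℕ) (r - 1) := by
      rw [← Finset.Ico_add_one_right_eq_Icc]
      congr 1
      omega
    have hmap : ∑ m ∈ Ici l, τ m = ∑ m ∈ Finset.Ico (l : ℕ) r, (νb m - νb (m + 1)) := by
      rw [← Fin.map_valEmbedding_Ici, Finset.sum_map]
      rfl
    rw [hmap, Finset.sum_Ico_eq_sub _ l.2.le,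
      Finset.sum_range_sub' νb, Finset.sum_range_sub' νb]
    simp only [hνb, l.2, dif_pos, dif_neg (lt_irrefl r)]
    simp
  have swap : ∀ h : Fin r → ℝ, ∑ l, ν l * h l = ∑ m, τ m * ∑ l ∈ Iic m, h l := by
    intro h
    calc ∑ l, ν l * h l = ∑ l, ∑ m, (if l ≤ m then τ m * h l else 0) := by
          refine Finset.sum_congr rfl fun l _ => ?_
          rw [hid l, Finset.sum_mul, ← Finset.sum_filter]
          congr 1
          ext m
          simp
      _ = ∑ m, τ m * ∑ l ∈ Iic m, h l := by
          rw [Finset.sum_comm]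
          refine Finset.sum_congr rfl fun m _ => ?_
          rw [Finset.mul_sum, ← Finset.sum_filter]
          congr 1
          ext l
          simp
  rw [swap f, swap g]
  exact Finset.sum_le_sum fun m _ => mul_le_mul_of_nonneg_left (hfg m) (hτ0 m)

lemma bessel {n r : ℕ} (zh : Fin r → Fin n → ℝ)
    (horth : ∀ l m, l ≠ m → zh l ⬝ᵥ zh m = 0) (hn1 : ∀ l, zh l ⬝ᵥ zh l ≤ 1)
    (x : Fin n → ℝ) : ∑ l, (x ⬝ᵥ zh l) ^ 2 ≤ x ⬝ᵥ x := by
  set S : Fin r → ℝ := fun l => x ⬝ᵥ zh l with hS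
  set y : Fin n → ℝ := fun i => x i - ∑ l, S l * zh l i with hy
  have h0 : 0 ≤ ∑ i, y i * y i :=
    Finset.sum_nonneg fun i _ => mul_self_nonneg _
  have hmid : ∑ i, x i * ∑ l, S l * zh l i = ∑ l, S l ^ 2 := by
    calc ∑ i, x i * ∑ l, S l * zh l i = ∑ i, ∑ l, S l * (x i * zh l i) := by
          refine Finset.sum_congr rfl fun i _ => ?_
          rw [Finset.mul_sum]
          exact Finset.sum_congr rfl fun l _ => by ring
      _ = ∑ l, S l * (x ⬝ᵥ zh l) := by
          rw [Finset.sum_comm]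
          exact Finset.sum_congr rfl fun l _ => by
            rw [← Finset.mul_sum]; rfl
      _ = ∑ l, S l ^ 2 := Finset.sum_congr rfl fun l _ => by simp only [hS]; ring
  have hlast : ∑ i, (∑ l, S l * zh l i) * (∑ m, S m * zh m i)
      = ∑ l, ∑ m, S l * S m * (zh l ⬝ᵥ zh m) := by
    calc ∑ i, (∑ l, S l * zh l i) * (∑ m, S m * zh m i)
        = ∑ i, ∑ l, ∑ m, S l * S m * (zh l i * zh m i) := by
          refine Finset.sum_congr rfl fun i _ => ?_
          rw [Finset.sum_mul_sum]
          exact Finset.sum_congr rfl fun l _ => Finset.sum_congr rfl fun m _ => by ring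
      _ = ∑ l, ∑ m, ∑ i, S l * S m * (zh l i * zh m i) := by
          rw [Finset.sum_comm]
          exact Finset.sum_congr rfl fun l _ => Finset.sum_comm
      _ = ∑ l, ∑ m, S l * S m * (zh l ⬝ᵥ zh m) := by
          refine Finset.sum_congr rfl fun l _ => Finset.sum_congr rfl fun m _ => ?_
          rw [← Finset.mul_sum]; rfl
  have hdiag : ∑ l, ∑ m, S l * S m * (zh l ⬝ᵥ zh m) = ∑ l, S l ^ 2 * (zh l ⬝ᵥ zh l) := by
    refine Finset.sum_congr rfl fun l _ => ?_
    rw [Finset.sum_eq_single l (fun m _ hm => by rw [horth l m (Ne.symm hm), mul_zero])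
      (fun h => absurd (Finset.mem_univ l) h)]
    ring
  have hexp : ∑ i, y i * y i = x ⬝ᵥ x - 2 * ∑ l, S l ^ 2 + ∑ l, S l ^ 2 * (zh l ⬝ᵥ zh l) := by
    have hterm : ∀ i, y i * y i = x i * x i - 2 * (x i * ∑ l, S l * zh l i)
        + (∑ l, S l * zh l i) * (∑ m, S m * zh m i) := fun i => by rw [hy]; ring
    rw [Finset.sum_congr rfl fun i _ => hterm i, Finset.sum_add_distrib,
      Finset.sum_sub_distrib, hlast, hdiag, ← Finset.mul_sum, hmid]
    rfl
  have hbound : ∑ l, S l ^ 2 * (zh l ⬝ᵥ zh l) ≤ ∑ l, S l ^ 2 :=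
    Finset.sum_le_sum fun l _ => by nlinarith [sq_nonneg (S l), hn1 l]
  rw [hexp] at h0
  linarith

lemma spectral_real {r : ℕ} (N : Matrix (Fin r) (Fin r) ℝ) (hN : N.IsHermitian) :
    ∃ (ν : Fin r → ℝ) (w : Fin r → Fin r → ℝ),
      (∀ l m, w l ⬝ᵥ w m = if l = m then (1:ℝ) else 0) ∧
      (∀ j j', ∑ l, w l j * w l j' = if j = j' then (1:ℝ) else 0) ∧
      (∀ j j', N j j' = ∑ l, ν l * w l j * w l j') := by
  set W : Matrix (Fin r) (Fin r) ℝ := (Matrix.IsHermitian.eigenvectorUnitary hN : Matrix (Fin r) (Fin r) ℝ) with hW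
  have hmem := (Matrix.IsHermitian.eigenvectorUnitary hN).2
  have h1 : W * Wᵀ = 1 := by
    have := Matrix.mem_unitaryGroup_iff.mp hmem
    simpa [Matrix.star_eq_conjTranspose] using this
  have h2 : Wᵀ * W = 1 := mul_eq_one_comm.mp h1
  refine ⟨hN.eigenvalues, fun l j => W j l, ?_, ?_, ?_⟩
  · intro l m
    have := congr_fun (congr_fun h2 l) m
    simpa [Matrix.mul_apply, Matrix.one_apply, dotProduct] using this
  · intro j j'
    have := congr_fun (congr_fun h1 j) j'
    simpa [Matrix.mul_apply, Matrix.one_apply] using this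
  · intro j j'
    have hst := hN.spectral_theorem
    have := congr_fun (congr_fun hst j) j'
    rw [this]
    simp [Matrix.mul_apply, Matrix.diagonal_apply, Matrix.star_eq_conjTranspose,
      Matrix.conjTranspose_apply, Finset.sum_mul]
    refine Finset.sum_congr rfl fun l _ => ?_
    simp only [hW, Matrix.IsHermitian.eigenvectorUnitary_apply]
    ring

lemma exists_sorted_eigen {n r : ℕ} (X : Matrix (Fin n) (Fin r) ℝ) :
    ∃ (ν : Fin r → ℝ) (w : Fin r → Fin r → ℝ),
      Antitone ν ∧ (∀ l, 0 ≤ ν l) ∧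
      (∀ l m, w l ⬝ᵥ w m = if l = m then (1:ℝ) else 0) ∧
      (∀ j j', ∑ l, w l j * w l j' = if j = j' then (1:ℝ) else 0) ∧
      (∀ j j', (Xᵀ * X) j j' = ∑ l, ν l * w l j * w l j') ∧
      (∀ l m, (X *ᵥ w l) ⬝ᵥ (X *ᵥ w m) = if l = m then ν l else 0) := by
  obtain ⟨ν₀, w₀, horth₀, hcomp₀, hNe₀⟩ :=
    spectral_real (Xᵀ * X) (Matrix.isHermitian_conjTranspose_mul_self X)
  set σ := Tuple.sort (fun l => -ν₀ l) with hσ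
  have hmono := Tuple.monotone_sort (fun l => -ν₀ l)
  set ν : Fin r → ℝ := fun l => ν₀ (σ l) with hν
  set w : Fin r → Fin r → ℝ := fun l => w₀ (σ l) with hw
  have hanti : Antitone ν := by
    intro a b hab
    have := hmono hab
    simp only [Function.comp_apply] at this
    simp only [hν]
    linarith
  have horth : ∀ l m, w l ⬝ᵥ w m = if l = m then (1:ℝ) else 0 := by
    intro l m
    rw [hw]
    simp only []
    rw [horth₀ (σ l) (σ m)]
    simp [EmbeddingLike.apply_eq_iff_eq]
  have hcomp : ∀ j j', ∑ l, w l j * w l j' = if j = j' then (1:ℝ) else 0 := by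
    intro j j'
    rw [← hcomp₀ j j']
    exact Equiv.sum_comp σ (fun l => w₀ l j * w₀ l j')
  have hNe : ∀ j j', (Xᵀ * X) j j' = ∑ l, ν l * w l j * w l j' := by
    intro j j'
    rw [hNe₀ j j']
    exact (Equiv.sum_comp σ (fun l => ν₀ l * w₀ l j * w₀ l j')).symm
  have hNw : ∀ m, (Xᵀ * X) *ᵥ w m = ν m • w m := by
    intro m
    funext j
    simp only [Matrix.mulVec, dotProduct, Pi.smul_apply, smul_eq_mul]
    calc ∑ j', (Xᵀ * X) j j' * w m j'
        = ∑ j', ∑ t, ν t * w t j * (w t j' * w m j') := by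
          refine Finset.sum_congr rfl fun j' _ => ?_
          rw [hNe j j', Finset.sum_mul]
          exact Finset.sum_congr rfl fun t _ => by ring
      _ = ∑ t, ν t * w t j * (w t ⬝ᵥ w m) := by
          rw [Finset.sum_comm]
          exact Finset.sum_congr rfl fun t _ => by rw [← Finset.mul_sum]; rfl
      _ = ν m * w m j := by
          rw [Finset.sum_eq_single m (fun t _ ht => by rw [horth t m, if_neg ht, mul_zero])
            (by simp)]
          rw [horth m m, if_pos rfl, mul_one]
  have hzz : ∀ l m, (X *ᵥ w l) ⬝ᵥ (X *ᵥ w m) = if l = m then ν l else 0 := by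
    intro l m
    rw [Matrix.dotProduct_mulVec, ← Matrix.vecMul_transpose, Matrix.vecMul_vecMul,
      ← Matrix.dotProduct_mulVec, hNw m, dotProduct_smul, horth l m]
    simp only [smul_eq_mul]
    split_ifs with h
    · subst h; rw [mul_one]
    · rw [mul_zero]
  have hν0 : ∀ l, 0 ≤ ν l := by
    intro l
    have h := hzz l l
    rw [if_pos rfl] at h
    rw [← h]
    exact Finset.sum_nonneg fun i _ => mul_self_nonneg _
  exact ⟨ν, w, hanti, hν0, horth, hcomp, hNe, hzz⟩

lemma swap4' {α β γ δ : Type*} [Fintype α] [Fintype β] [Fintype γ] [Fintype δ]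
    (G : α → β → γ → δ → ℝ) :
    ∑ j, ∑ j', ∑ l, ∑ m, G j j' l m = ∑ l, ∑ m, ∑ j, ∑ j', G j j' l m := by
  calc ∑ j, ∑ j', ∑ l, ∑ m, G j j' l m
      = ∑ j, ∑ l, ∑ j', ∑ m, G j j' l m :=
        Finset.sum_congr rfl fun j _ => Finset.sum_comm
    _ = ∑ l, ∑ j, ∑ j', ∑ m, G j j' l m := Finset.sum_comm
    _ = ∑ l, ∑ j, ∑ m, ∑ j', G j j' l m :=
        Finset.sum_congr rfl fun l _ => Finset.sum_congr rfl fun j _ => Finset.sum_comm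
    _ = ∑ l, ∑ m, ∑ j, ∑ j', G j j' l m :=
        Finset.sum_congr rfl fun l _ => Finset.sum_comm

lemma core {n r : ℕ} (hr : r ≤ n) (s : Fin n → ℝ) (d : Fin r → ℝ)
    (hs0 : ∀ i, 0 ≤ s i) (hsA : Antitone s) (hd0 : ∀ i, 0 ≤ d i) (hdM : Monotone d)
    (X : Matrix (Fin n) (Fin r) ℝ) :
    2 * (∑ i, s i * ∑ j, X i j ^ 2) - 2 * (∑ j, d j * ∑ i, X i j ^ 2)
      ≤ (∑ j, ∑ j', (∑ i, X i j * X i j') ^ 2)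
        + ∑ j : Fin r, (max (s (Fin.castLE hr j) - d j) 0) ^ 2 := by
  obtain ⟨ν, w, hanti, hν0, horth, hcomp, hNe, hzz⟩ := exists_sorted_eigen X
  set c : Fin r → ℝ := fun j => max (s (Fin.castLE hr j) - d j) 0 with hc
  set z : Fin r → Fin n → ℝ := fun l => X *ᵥ w l with hz
  have hzi : ∀ l i, z l i = ∑ j, X i j * w l j := by
    intro l i; simp [hz, Matrix.mulVec, dotProduct]
  have hdot : ∀ l m, (∑ j, w l j * w m j) = (if l = m then (1:ℝ) else 0) := by
    intro l m; simpa [dotProduct] using horth l m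
  have hznorm : ∀ l, ∑ i, (z l i) ^ 2 = ν l := by
    intro l
    have := hzz l l
    rw [if_pos rfl] at this
    rw [← this]
    simp [hz, dotProduct, pow_two]
  -- (B) row sums
  have hrow : ∀ i, ∑ l, (z l i) ^ 2 = ∑ j, X i j ^ 2 := by
    intro i
    calc ∑ l, (z l i) ^ 2
        = ∑ l, ∑ j, ∑ j', (X i j * X i j') * (w l j * w l j') := by
          refine Finset.sum_congr rfl fun l _ => ?_
          rw [hzi, pow_two, Finset.sum_mul_sum]
          exact Finset.sum_congr rfl fun a _ => Finset.sum_congr rfl fun b _ => by ring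
      _ = ∑ j, ∑ j', (X i j * X i j') * (∑ l, w l j * w l j') := by
          rw [Finset.sum_comm]
          refine Finset.sum_congr rfl fun j _ => ?_
          rw [Finset.sum_comm]
          exact Finset.sum_congr rfl fun j' _ => by rw [← Finset.mul_sum]
      _ = ∑ j, X i j ^ 2 := by
          refine Finset.sum_congr rfl fun j _ => ?_
          rw [Finset.sum_eq_single j
            (fun j' _ hj' => by rw [hcomp j j', if_neg (fun h => hj' h.symm), mul_zero])
            (by simp)]
          rw [hcomp j j, if_pos rfl, mul_one, pow_two]
  -- (D) trace D N
  have htrD : ∑ j, d j * ∑ i, X i j ^ 2 = ∑ l, ν l * ∑ j, d j * (w l j) ^ 2 := by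
    have hNjj : ∀ j, ∑ i, X i j ^ 2 = ∑ l, ν l * (w l j) ^ 2 := by
      intro j
      have h1 : (Xᵀ * X) j j = ∑ i, X i j ^ 2 := by
        simp [Matrix.mul_apply, Matrix.transpose_apply, pow_two]
      have h2 := hNe j j
      rw [h1] at h2
      rw [h2]
      exact Finset.sum_congr rfl fun l _ => by ring
    calc ∑ j, d j * ∑ i, X i j ^ 2 = ∑ j, ∑ l, d j * (ν l * (w l j) ^ 2) := by
          refine Finset.sum_congr rfl fun j _ => ?_
          rw [hNjj j, Finset.mul_sum]
      _ = ∑ l, ν l * ∑ j, d j * (w l j) ^ 2 := by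
          rw [Finset.sum_comm]
          refine Finset.sum_congr rfl fun l _ => ?_
          rw [Finset.mul_sum]
          exact Finset.sum_congr rfl fun j _ => by ring
  -- (E) norm
  have hnormN : ∑ j, ∑ j', (∑ i, X i j * X i j') ^ 2 = ∑ l, ν l ^ 2 := by
    have hN : ∀ j j', (∑ i, X i j * X i j') = (Xᵀ * X) j j' := by
      intro j j'; simp [Matrix.mul_apply, Matrix.transpose_apply]
    calc ∑ j, ∑ j', (∑ i, X i j * X i j') ^ 2
        = ∑ j, ∑ j', ∑ l, ∑ m, (ν l * ν m) * ((w l j * w m j) * (w l j' * w m j')) := by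
          refine Finset.sum_congr rfl fun j _ => Finset.sum_congr rfl fun j' _ => ?_
          rw [hN j j', hNe j j', pow_two, Finset.sum_mul_sum]
          exact Finset.sum_congr rfl fun l _ => Finset.sum_congr rfl fun m _ => by ring
      _ = ∑ l, ∑ m, ∑ j, ∑ j', (ν l * ν m) * ((w l j * w m j) * (w l j' * w m j')) := swap4' _
      _ = ∑ l, ∑ m, (ν l * ν m) * ((∑ j, w l j * w m j) * (∑ j', w l j' * w m j')) := by
          refine Finset.sum_congr rfl fun l _ => Finset.sum_congr rfl fun m _ => ?_
          rw [Finset.sum_mul_sum, Finset.mul_sum]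
          refine Finset.sum_congr rfl fun j _ => ?_
          rw [Finset.mul_sum]
      _ = ∑ l, ν l ^ 2 := by
          refine Finset.sum_congr rfl fun l _ => ?_
          rw [Finset.sum_eq_single l
            (fun m _ hm => by rw [hdot l m, if_neg (fun h => hm h.symm)]; ring)
            (by simp)]
          rw [hdot l l, if_pos rfl]
          ring
  -- (F) Claim A
  have claimA : ∑ i, s i * ∑ j, X i j ^ 2 ≤ ∑ l, s (Fin.castLE hr l) * ν l := by
    set f : Fin n → ℝ := fun i => ∑ l, (z l i) ^ 2 with hf
    set g : Fin n → ℝ := fun i => ∑ l : Fin r, (if (l : ℕ) = (i : ℕ) then ν l else 0) with hg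
    have hgsum : ∑ i, s i * g i = ∑ l, s (Fin.castLE hr l) * ν l := by
      calc ∑ i, s i * g i = ∑ i : Fin n, ∑ l : Fin r, (if (l : ℕ) = (i : ℕ) then s i * ν l else 0) := by
            refine Finset.sum_congr rfl fun i _ => ?_
            rw [hg]
            simp only []
            rw [Finset.mul_sum]
            exact Finset.sum_congr rfl fun l _ => by rw [mul_ite, mul_zero]
        _ = ∑ l : Fin r, ∑ i : Fin n, (if (l : ℕ) = (i : ℕ) then s i * ν l else 0) := Finset.sum_comm
        _ = ∑ l, s (Fin.castLE hr l) * ν l := by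
            refine Finset.sum_congr rfl fun l _ => ?_
            rw [Finset.sum_eq_single (Fin.castLE hr l)
              (fun i _ hi => by
                refine if_neg (fun h => hi ?_)
                exact Fin.ext h.symm)
              (by simp)]
            simp
    have prefixA : ∀ k : Fin n, ∑ i ∈ Iic k, f i ≤ ∑ i ∈ Iic k, g i := by
      intro k
      set t : Fin r → ℝ := fun l => ∑ i ∈ Iic k, (z l i) ^ 2 with ht
      have ht0 : ∀ l, 0 ≤ t l := fun l => Finset.sum_nonneg fun i _ => sq_nonneg _
      have htν : ∀ l, t l ≤ ν l := by
        intro l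
        rw [← hznorm l]
        exact Finset.sum_le_sum_of_subset_of_nonneg (Finset.subset_univ _)
          (fun i _ _ => sq_nonneg _)
      have hLHS : ∑ i ∈ Iic k, f i = ∑ l, t l := by
        rw [hf]
        simp only []
        rw [Finset.sum_comm]
      have hRHS : ∑ i ∈ Iic k, g i
          = ∑ l ∈ univ.filter (fun l : Fin r => (l : ℕ) ≤ (k : ℕ)), ν l := by
        rw [hg]
        simp only []
        rw [Finset.sum_comm, Finset.sum_filter]
        refine Finset.sum_congr rfl fun l _ => ?_
        by_cases hlk : (l : ℕ) ≤ (k : ℕ)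
        · rw [if_pos hlk]
          rw [Finset.sum_eq_single_of_mem (Fin.castLE hr l)
            (by simp [Finset.mem_Iic, Fin.le_def, hlk])
            (fun i _ hi => by
              refine if_neg (fun h => hi ?_)
              exact Fin.ext h.symm)]
          simp
        · rw [if_neg hlk]
          refine Finset.sum_eq_zero fun i hi => ?_
          rw [Finset.mem_Iic, Fin.le_def] at hi
          refine if_neg (fun h => hlk ?_)
          omega
      rw [hLHS, hRHS]
      -- apply rearrange_upper
      set ρ : Fin r → ℝ := fun l => if ν l = 0 then 0 else t l / ν l with hρ
      have hνpos : ∀ l, ν l ≠ 0 → 0 < ν l := fun l h => lt_of_le_of_ne (hν0 l) (Ne.symm h)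
      have hρ0 : ∀ l, 0 ≤ ρ l := by
        intro l
        rw [hρ]
        simp only []
        split_ifs with h
        · exact le_refl 0
        · exact div_nonneg (ht0 l) (hν0 l)
      have hρ1 : ∀ l, ρ l ≤ 1 := by
        intro l
        rw [hρ]
        simp only []
        split_ifs with h
        · norm_num
        · exact div_le_one_of_le₀ (htν l) (hν0 l)
      have htρ : ∀ l, t l = ν l * ρ l := by
        intro l
        rw [hρ]
        simp only []
        split_ifs with h
        · rw [h, mul_zero]
          have := htν l
          rw [h] at this
          linarith [ht0 l]
        · field_simp
      have hcard : ∑ l, ρ l ≤ ((univ.filter (fun l : Fin r => (l : ℕ) ≤ (k : ℕ))).card : ℝ) := by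
        set zh : Fin r → Fin n → ℝ :=
          fun l i => if ν l = 0 then 0 else z l i / Real.sqrt (ν l) with hzh
        have hρzh : ∀ l, ρ l = ∑ i ∈ Iic k, (zh l i) ^ 2 := by
          intro l
          rw [hρ, hzh]
          simp only []
          split_ifs with h
          · simp
          · rw [ht]
            simp only []
            rw [Finset.sum_div]
            refine Finset.sum_congr rfl fun i _ => ?_
            rw [div_pow, Real.sq_sqrt (hν0 l)]
        have hzdot : ∀ l m, ∑ i, z l i * z m i = if l = m then ν l else 0 := by
          intro l m
          rw [← hzz l m]
          simp [hz, dotProduct]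
        have horthzh : ∀ l m, l ≠ m → zh l ⬝ᵥ zh m = 0 := by
          intro l m hlm
          rw [hzh]
          simp only [dotProduct]
          by_cases h1 : ν l = 0
          · simp [h1]
          · by_cases h2 : ν m = 0
            · simp [h2]
            · simp only [h1, h2, if_false]
              have : ∀ i, z l i / Real.sqrt (ν l) * (z m i / Real.sqrt (ν m))
                  = (z l i * z m i) / (Real.sqrt (ν l) * Real.sqrt (ν m)) := fun i => by
                rw [div_mul_div_comm]
              rw [Finset.sum_congr rfl fun i _ => this i, ← Finset.sum_div, hzdot l m,
                if_neg hlm, zero_div]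
        have hzh1 : ∀ l, zh l ⬝ᵥ zh l ≤ 1 := by
          intro l
          rw [hzh]
          simp only [dotProduct]
          by_cases h1 : ν l = 0
          · simp [h1]
          · simp only [h1, if_false]
            have : ∀ i, z l i / Real.sqrt (ν l) * (z l i / Real.sqrt (ν l))
                = (z l i * z l i) / (Real.sqrt (ν l) * Real.sqrt (ν l)) := fun i => by
              rw [div_mul_div_comm]
            rw [Finset.sum_congr rfl fun i _ => this i, ← Finset.sum_div,
              Real.mul_self_sqrt (hν0 l), hzdot l l, if_pos rfl, div_self h1]
        have hper : ∀ i : Fin n, ∑ l, (zh l i) ^ 2 ≤ 1 := by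
          intro i
          have hb := bessel zh horthzh hzh1 (Pi.single i 1)
          have h1 : ∀ l, Pi.single i (1:ℝ) ⬝ᵥ zh l = zh l i := fun l => by
            rw [single_dotProduct, one_mul]
          have h2 : Pi.single i (1:ℝ) ⬝ᵥ Pi.single i 1 = 1 := by
            rw [single_dotProduct, one_mul, Pi.single_eq_same]
          rw [Finset.sum_congr rfl fun l _ => by rw [h1 l]] at hb
          rwa [h2] at hb
        have hbess : ∑ l, ρ l ≤ ((k : ℕ) + 1 : ℝ) := by
          calc ∑ l, ρ l = ∑ l, ∑ i ∈ Iic k, (zh l i) ^ 2 :=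
                Finset.sum_congr rfl fun l _ => hρzh l
            _ = ∑ i ∈ Iic k, ∑ l, (zh l i) ^ 2 := Finset.sum_comm
            _ ≤ ∑ i ∈ Iic k, (1:ℝ) := Finset.sum_le_sum fun i _ => hper i
            _ = ((k : ℕ) + 1 : ℝ) := by
                rw [Finset.sum_const, Fin.card_Iic]
                simp
        by_cases hkr : (k : ℕ) < r
        · have hfe : univ.filter (fun l : Fin r => (l : ℕ) ≤ (k : ℕ))
              = Iic (⟨(k : ℕ), hkr⟩ : Fin r) := by
            ext l
            simp [Finset.mem_Iic, Fin.le_def]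
          rw [hfe, Fin.card_Iic]
          exact hbess.trans (by simp)
        · have hfe : univ.filter (fun l : Fin r => (l : ℕ) ≤ (k : ℕ)) = univ := by
            ext l
            simp only [Finset.mem_filter, Finset.mem_univ, true_and, iff_true]
            omega
          rw [hfe]
          calc ∑ l, ρ l ≤ ∑ _l : Fin r, (1:ℝ) := Finset.sum_le_sum fun l _ => hρ1 l
            _ = (univ : Finset (Fin r)).card := by simp
            _ ≤ _ := le_refl _
      calc ∑ l, t l = ∑ l, ν l * ρ l := Finset.sum_congr rfl fun l _ => htρ l
        _ ≤ _ := rearrange_upper ν ρ hanti hν0 hρ0 hρ1 _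
            (fun a b hab hb => by
              simp only [Finset.mem_filter, Finset.mem_univ, true_and] at *
              exact le_trans (Fin.le_def.mp hab) hb)
            hcard
    calc ∑ i, s i * ∑ j, X i j ^ 2 = ∑ i, s i * f i := by
          refine Finset.sum_congr rfl fun i _ => ?_
          rw [hf]; simp only []; rw [hrow i]
      _ ≤ ∑ i, s i * g i := abel_compare s f g hsA hs0 prefixA
      _ = ∑ l, s (Fin.castLE hr l) * ν l := hgsum
  -- (G) Claim B
  have claimB : ∑ l, ν l * d l ≤ ∑ l, ν l * ∑ j, d j * (w l j) ^ 2 := by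
    apply abel_compare ν _ _ hanti hν0
    intro m
    set q : Fin r → ℝ := fun j => ∑ l ∈ Iic m, (w l j) ^ 2 with hq
    have hq0 : ∀ j, 0 ≤ q j := fun j => Finset.sum_nonneg fun l _ => sq_nonneg _
    have hq1 : ∀ j, q j ≤ 1 := by
      intro j
      have h1 : ∑ l, (w l j) ^ 2 = 1 := by
        have := hcomp j j
        rw [if_pos rfl] at this
        rw [← this]
        exact Finset.sum_congr rfl fun l _ => (pow_two _)
      rw [← h1, hq]
      exact Finset.sum_le_sum_of_subset_of_nonneg (Finset.subset_univ _)
        (fun l _ _ => sq_nonneg _)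
    have hqsum : ∑ j, q j = ((Iic m).card : ℝ) := by
      rw [hq]
      simp only []
      rw [Finset.sum_comm]
      have : ∀ l, ∑ j, (w l j) ^ 2 = 1 := by
        intro l
        have := horth l l
        rw [if_pos rfl] at this
        rw [← this]
        simp [dotProduct, pow_two]
      rw [Finset.sum_congr rfl fun l _ => this l]
      simp
    have := rearrange_lower d q hdM hq0 hq1 (Iic m)
      (fun a b hab hb => le_trans hab (Finset.mem_Iic.mp hb) |> Finset.mem_Iic.mpr)
      hqsum
    calc ∑ l ∈ Iic m, d l ≤ ∑ j, d j * q j := this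
      _ = ∑ l ∈ Iic m, ∑ j, d j * (w l j) ^ 2 := by
          rw [hq]
          simp only []
          rw [Finset.sum_comm]
          refine Finset.sum_congr rfl fun j _ => ?_
          rw [Finset.mul_sum]
  -- (H) assembly
  have final : ∑ l, 2 * ((s (Fin.castLE hr l) - d l) * ν l) ≤ ∑ l, (c l ^ 2 + ν l ^ 2) := by
    refine Finset.sum_le_sum fun l _ => ?_
    have h1 : s (Fin.castLE hr l) - d l ≤ c l := le_max_left _ _
    have h2 : (0:ℝ) ≤ c l := le_max_right _ _
    nlinarith [sq_nonneg (c l - ν l), hν0 l]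
  have e1 : ∑ l, (c l ^ 2 + ν l ^ 2) = (∑ l, c l ^ 2) + ∑ l, ν l ^ 2 :=
    Finset.sum_add_distrib
  have e2 : ∑ l, 2 * ((s (Fin.castLE hr l) - d l) * ν l)
      = 2 * (∑ l, s (Fin.castLE hr l) * ν l) - 2 * (∑ l, ν l * d l) := by
    rw [Finset.mul_sum, Finset.mul_sum, ← Finset.sum_sub_distrib]
    exact Finset.sum_congr rfl fun l _ => by ring
  rw [hnormN, htrD]
  have hA2 : 2 * (∑ i, s i * ∑ j, X i j ^ 2) ≤ 2 * ∑ l, s (Fin.castLE hr l) * ν l := by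
    linarith [claimA]
  have hB2 : 2 * (∑ l, ν l * d l) ≤ 2 * (∑ l, ν l * ∑ j, d j * (w l j) ^ 2) := by
    linarith [claimB]
  rw [e2, e1] at final
  linarith

lemma sum_fin_le {n r : ℕ} (hr : r ≤ n) (φ : ℕ → ℝ) :
    ∑ i : Fin n, (if (i : ℕ) < r then φ (i : ℕ) else 0) = ∑ j : Fin r, φ (j : ℕ) := by
  rw [Fin.sum_univ_eq_sum_range (fun i => if i < r then φ i else 0) n,
    Fin.sum_univ_eq_sum_range (fun i => φ i) r]
  rw [← Finset.sum_subset (Finset.range_subset_range.mpr hr)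
    (fun x _ hx => by rw [if_neg (by simpa using hx)])]
  exact Finset.sum_congr rfl fun x hx => by rw [if_pos (by simpa using hx)]

lemma hfip_diag {n r : ℕ} (d : Fin r → ℝ) (X : Matrix (Fin n) (Fin r) ℝ) :
    fip (diagonal d) (Xᵀ * X) = ∑ j, d j * ∑ i, X i j ^ 2 := by
  unfold fip
  refine Finset.sum_congr rfl fun j _ => ?_
  rw [Finset.sum_eq_single j
    (fun j' _ hj' => by rw [Matrix.diagonal_apply_ne d (Ne.symm hj'), zero_mul])
    (by simp)]
  rw [Matrix.diagonal_apply_eq]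
  congr 1
  simp [Matrix.mul_apply, Matrix.transpose_apply, pow_two]

lemma hfrob_diag {n r : ℕ} (s : Fin n → ℝ) (X : Matrix (Fin n) (Fin r) ℝ) :
    frob2 (diagonal s - X * Xᵀ)
      = (∑ i, s i ^ 2) - 2 * (∑ i, s i * ∑ j, X i j ^ 2)
        + ∑ i, ∑ i', (∑ j, X i j * X i' j) ^ 2 := by
  have hM : ∀ i i', (X * Xᵀ) i i' = ∑ j, X i j * X i' j := by
    intro i i'; simp [Matrix.mul_apply, Matrix.transpose_apply]
  have key : ∀ i i', ((diagonal s - X * Xᵀ) i i') ^ 2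
      = ((X * Xᵀ) i i') ^ 2 + (if i = i' then s i ^ 2 - 2 * s i * (X * Xᵀ) i i' else 0) := by
    intro i i'
    by_cases h : i = i'
    · subst h
      rw [Matrix.sub_apply, Matrix.diagonal_apply_eq, if_pos rfl]
      ring
    · simp only [Matrix.sub_apply, Matrix.diagonal_apply_ne s h, if_neg h]
      ring
  unfold frob2
  calc ∑ i, ∑ i', ((diagonal s - X * Xᵀ) i i') ^ 2
      = ∑ i, ∑ i', (((X * Xᵀ) i i') ^ 2
          + (if i = i' then s i ^ 2 - 2 * s i * (X * Xᵀ) i i' else 0)) :=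
        Finset.sum_congr rfl fun i _ => Finset.sum_congr rfl fun i' _ => key i i'
    _ = (∑ i, ∑ i', ((X * Xᵀ) i i') ^ 2)
          + ∑ i, (s i ^ 2 - 2 * s i * (X * Xᵀ) i i) := by
        rw [← Finset.sum_add_distrib]
        refine Finset.sum_congr rfl fun i _ => ?_
        rw [Finset.sum_add_distrib]
        congr 1
        rw [Finset.sum_ite_eq]
        simp
    _ = (∑ i, s i ^ 2) - 2 * (∑ i, s i * ∑ j, X i j ^ 2)
        + ∑ i, ∑ i', (∑ j, X i j * X i' j) ^ 2 := by
        rw [Finset.sum_sub_distrib]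
        have h1 : ∀ i, (X * Xᵀ) i i = ∑ j, X i j ^ 2 := by
          intro i; rw [hM]; exact Finset.sum_congr rfl fun j _ => (pow_two _).symm
        have h2 : ∑ i, 2 * s i * (X * Xᵀ) i i = 2 * ∑ i, s i * ∑ j, X i j ^ 2 := by
          rw [Finset.mul_sum]
          exact Finset.sum_congr rfl fun i _ => by rw [h1 i]; ring
        have h3 : ∀ i i', ((X * Xᵀ) i i') ^ 2 = (∑ j, X i j * X i' j) ^ 2 := by
          intro i i'; rw [hM]
        rw [h2]
        rw [Finset.sum_congr rfl fun i (_ : i ∈ univ) =>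
          Finset.sum_congr rfl fun i' (_ : i' ∈ univ) => h3 i i']
        ring

lemma norm_flip {n r : ℕ} (X : Matrix (Fin n) (Fin r) ℝ) :
    ∑ i, ∑ i', (∑ j, X i j * X i' j) ^ 2 = ∑ j, ∑ j', (∑ i, X i j * X i j') ^ 2 := by
  calc ∑ i, ∑ i', (∑ j, X i j * X i' j) ^ 2
      = ∑ i, ∑ i', ∑ j, ∑ j', (X i j * X i j') * (X i' j * X i' j') := by
        refine Finset.sum_congr rfl fun i _ => Finset.sum_congr rfl fun i' _ => ?_
        rw [pow_two, Finset.sum_mul_sum]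
        exact Finset.sum_congr rfl fun j _ => Finset.sum_congr rfl fun j' _ => by ring
    _ = ∑ j, ∑ j', ∑ i, ∑ i', (X i j * X i j') * (X i' j * X i' j') := swap4' _
    _ = ∑ j, ∑ j', (∑ i, X i j * X i j') ^ 2 := by
        refine Finset.sum_congr rfl fun j _ => Finset.sum_congr rfl fun j' _ => ?_
        rw [pow_two, Finset.sum_mul_sum]

lemma diag_lb {n r : ℕ} (hr : r ≤ n) (s : Fin n → ℝ) (d : Fin r → ℝ)
    (hs0 : ∀ i, 0 ≤ s i) (hsA : Antitone s) (hd0 : ∀ i, 0 ≤ d i) (hdM : Monotone d)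
    (X : Matrix (Fin n) (Fin r) ℝ) :
    (∑ i, s i ^ 2) - (∑ j : Fin r, (max (s (Fin.castLE hr j) - d j) 0) ^ 2)
      ≤ frob2 (diagonal s - X * Xᵀ) + 2 * fip (diagonal d) (Xᵀ * X) := by
  rw [hfrob_diag, hfip_diag, norm_flip]
  linarith [core hr s d hs0 hsA hd0 hdM X]

lemma diag_eq {n r : ℕ} (hr : r ≤ n) (s : Fin n → ℝ) (d : Fin r → ℝ) :
    frob2 (diagonal s - (Matrix.of fun (i : Fin n) (j : Fin r) =>
        if (i : ℕ) = (j : ℕ) then Real.sqrt (max (s (Fin.castLE hr j) - d j) 0) else 0)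
      * (Matrix.of fun (i : Fin n) (j : Fin r) =>
        if (i : ℕ) = (j : ℕ) then Real.sqrt (max (s (Fin.castLE hr j) - d j) 0) else 0)ᵀ)
      + 2 * fip (diagonal d) ((Matrix.of fun (i : Fin n) (j : Fin r) =>
        if (i : ℕ) = (j : ℕ) then Real.sqrt (max (s (Fin.castLE hr j) - d j) 0) else 0)ᵀ
      * (Matrix.of fun (i : Fin n) (j : Fin r) =>
        if (i : ℕ) = (j : ℕ) then Real.sqrt (max (s (Fin.castLE hr j) - d j) 0) else 0))
    = (∑ i, s i ^ 2) - ∑ j : Fin r, (max (s (Fin.castLE hr j) - d j) 0) ^ 2 := by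
  set c : Fin r → ℝ := fun j => max (s (Fin.castLE hr j) - d j) 0 with hcdef
  have hc0 : ∀ j, 0 ≤ c j := fun j => le_max_right _ _
  set Xd : Matrix (Fin n) (Fin r) ℝ := Matrix.of fun (i : Fin n) (j : Fin r) =>
    if (i : ℕ) = (j : ℕ) then Real.sqrt (c j) else 0 with hXd
  set cn : ℕ → ℝ := fun m => if h : m < r then c ⟨m, h⟩ else 0 with hcn
  have hXdsq : ∀ (i : Fin n) (j : Fin r),
      Xd i j ^ 2 = if (i : ℕ) = (j : ℕ) then c j else 0 := by
    intro i j
    rw [hXd]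
    simp only [Matrix.of_apply]
    split_ifs with h
    · exact Real.sq_sqrt (hc0 j)
    · ring
  -- column sums
  have hcol : ∀ j : Fin r, ∑ i, Xd i j ^ 2 = c j := by
    intro j
    rw [Finset.sum_congr rfl fun i (_ : i ∈ univ) => hXdsq i j]
    rw [Finset.sum_eq_single (Fin.castLE hr j)
      (fun i _ hi => by
        refine if_neg (fun h => hi ?_)
        exact Fin.ext h)
      (by simp)]
    simp
  -- row sums
  have hrow : ∀ i : Fin n, ∑ j, Xd i j ^ 2 = if (i : ℕ) < r then cn (i : ℕ) else 0 := by
    intro i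
    rw [Finset.sum_congr rfl fun j (_ : j ∈ univ) => hXdsq i j]
    by_cases h : (i : ℕ) < r
    · rw [if_pos h]
      rw [Finset.sum_eq_single (⟨(i : ℕ), h⟩ : Fin r)
        (fun j _ hj => by
          refine if_neg (fun hh => hj ?_)
          exact Fin.ext hh.symm)
        (by simp)]
      rw [if_pos rfl, hcn]
      simp only []
      rw [dif_pos h]
    · rw [if_neg h]
      refine Finset.sum_eq_zero fun j _ => ?_
      refine if_neg (fun hh => h ?_)
      rw [hh]
      exact j.2
  -- cross sums
  have hcross : ∀ i i' : Fin n, (∑ j, Xd i j * Xd i' j)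
      = if i = i' then (if (i : ℕ) < r then cn (i : ℕ) else 0) else 0 := by
    intro i i'
    by_cases h : i = i'
    · subst h
      rw [if_pos rfl, ← hrow i]
      exact Finset.sum_congr rfl fun j _ => (pow_two _).symm
    · rw [if_neg h]
      refine Finset.sum_eq_zero fun j _ => ?_
      rw [hXd]
      simp only [Matrix.of_apply]
      by_cases h1 : (i : ℕ) = (j : ℕ)
      · by_cases h2 : (i' : ℕ) = (j : ℕ)
        · exact absurd (Fin.ext (h1.trans h2.symm) : i = i') h
        · rw [if_neg h2, mul_zero]
      · rw [if_neg h1, zero_mul]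
  have hsn : ∀ j : Fin r, cn (j : ℕ) = c j := by
    intro j
    rw [hcn]
    simp only [j.2, dif_pos]
  -- piece 1
  have p1 : ∑ i, s i * ∑ j, Xd i j ^ 2 = ∑ j, s (Fin.castLE hr j) * c j := by
    calc ∑ i, s i * ∑ j, Xd i j ^ 2
        = ∑ i : Fin n, (if (i : ℕ) < r then
            (if h : (i : ℕ) < n then s ⟨(i : ℕ), h⟩ else 0) * cn (i : ℕ) else 0) := by
          refine Finset.sum_congr rfl fun i _ => ?_
          rw [hrow i]
          by_cases h : (i : ℕ) < r
          · rw [if_pos h, if_pos h]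
            congr 1
            rw [dif_pos i.2]
          · rw [if_neg h, if_neg h, mul_zero]
      _ = ∑ j : Fin r, (if h : (j : ℕ) < n then s ⟨(j : ℕ), h⟩ else 0) * cn (j : ℕ) :=
          sum_fin_le hr (fun m => (if h : m < n then s ⟨m, h⟩ else 0) * cn m)
      _ = ∑ j, s (Fin.castLE hr j) * c j := by
          refine Finset.sum_congr rfl fun j _ => ?_
          rw [hsn j]
          congr 1
          rw [dif_pos (lt_of_lt_of_le j.2 hr)]
          rfl
  -- piece 2 : double sum of cross squared
  have p2 : ∑ i, ∑ i', (∑ j, Xd i j * Xd i' j) ^ 2 = ∑ j : Fin r, c j ^ 2 := by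
    calc ∑ i, ∑ i', (∑ j, Xd i j * Xd i' j) ^ 2
        = ∑ i : Fin n, (if (i : ℕ) < r then (cn (i : ℕ)) ^ 2 else 0) := by
          refine Finset.sum_congr rfl fun i _ => ?_
          rw [Finset.sum_congr rfl fun i' (_ : i' ∈ univ) => by rw [hcross i i']]
          rw [Finset.sum_eq_single i
            (fun i' _ hi' => by rw [if_neg (fun hh => hi' hh.symm)]; ring)
            (by simp)]
          rw [if_pos rfl]
          split_ifs with h
          · rfl
          · ring
      _ = ∑ j : Fin r, (cn (j : ℕ)) ^ 2 := sum_fin_le hr (fun m => (cn m) ^ 2)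
      _ = ∑ j : Fin r, c j ^ 2 := Finset.sum_congr rfl fun j _ => by rw [hsn j]
  -- piece 3
  have p3 : ∑ j, d j * ∑ i, Xd i j ^ 2 = ∑ j, d j * c j :=
    Finset.sum_congr rfl fun j _ => by rw [hcol j]
  rw [hfrob_diag, hfip_diag, p1, p2, p3]
  have key : ∀ j : Fin r, c j ^ 2 - 2 * (s (Fin.castLE hr j) * c j) + 2 * (d j * c j)
      = - c j ^ 2 := by
    intro j
    rcases le_or_gt (s (Fin.castLE hr j) - d j) 0 with h | h
    · have : c j = 0 := max_eq_right h
      rw [this]; ring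
    · have : c j = s (Fin.castLE hr j) - d j := max_eq_left h.le
      rw [this]; ring
  have e1 : ∑ j : Fin r, (c j ^ 2 - 2 * (s (Fin.castLE hr j) * c j) + 2 * (d j * c j))
      = ∑ j : Fin r, - c j ^ 2 := Finset.sum_congr rfl fun j _ => key j
  have e2 : ∑ j : Fin r, (c j ^ 2 - 2 * (s (Fin.castLE hr j) * c j) + 2 * (d j * c j))
      = (∑ j : Fin r, c j ^ 2) - 2 * (∑ j, s (Fin.castLE hr j) * c j)
        + 2 * (∑ j, d j * c j) := by
    rw [Finset.mul_sum, Finset.mul_sum, Finset.sum_add_distrib, Finset.sum_sub_distrib]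
  have e3 : ∑ j : Fin r, - c j ^ 2 = - ∑ j : Fin r, c j ^ 2 := by
    rw [Finset.sum_neg_distrib]
  rw [e2] at e1
  rw [e3] at e1
  linarith

lemma frob2_eq_trace {m k : ℕ} (M : Matrix (Fin m) (Fin k) ℝ) :
    frob2 M = Matrix.trace (Mᵀ * M) := by
  unfold frob2 Matrix.trace
  rw [Finset.sum_comm]
  refine Finset.sum_congr rfl fun j _ => ?_
  simp [Matrix.mul_apply, Matrix.transpose_apply, Matrix.diag, pow_two]

lemma fip_eq_trace {m k : ℕ} (A B : Matrix (Fin m) (Fin k) ℝ) :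
    fip A B = Matrix.trace (Aᵀ * B) := by
  unfold fip Matrix.trace
  rw [Finset.sum_comm]
  refine Finset.sum_congr rfl fun j _ => ?_
  simp [Matrix.mul_apply, Matrix.transpose_apply, Matrix.diag]

lemma frob2_conj {n' m' : ℕ} (P : Matrix (Fin n') (Fin n') ℝ) (hP : Pᵀ * P = 1)
    (M : Matrix (Fin n') (Fin m') ℝ) : frob2 (P * M) = frob2 M := by
  rw [frob2_eq_trace, frob2_eq_trace, Matrix.transpose_mul, Matrix.mul_assoc,
    ← Matrix.mul_assoc Pᵀ P M, hP, Matrix.one_mul]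

lemma frob2_mulright {m' k' : ℕ} (Q : Matrix (Fin k') (Fin k') ℝ) (hQ : Q * Qᵀ = 1)
    (M : Matrix (Fin m') (Fin k') ℝ) : frob2 (M * Q) = frob2 M := by
  rw [frob2_eq_trace, frob2_eq_trace, Matrix.transpose_mul]
  have : Qᵀ * Mᵀ * (M * Q) = Qᵀ * (Mᵀ * M) * Q := by
    rw [Matrix.mul_assoc, Matrix.mul_assoc, Matrix.mul_assoc]
  rw [this, Matrix.trace_mul_comm, ← Matrix.mul_assoc, ← Matrix.mul_assoc, hQ,
    Matrix.one_mul]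

lemma fip_conj {k' : ℕ} (V : Matrix (Fin k') (Fin k') ℝ) (hV1 : V * Vᵀ = 1)
    (C E : Matrix (Fin k') (Fin k') ℝ) :
    fip (Vᵀ * C * V) (Vᵀ * E * V) = fip C E := by
  rw [fip_eq_trace, fip_eq_trace]
  have h1 : (Vᵀ * C * V)ᵀ = Vᵀ * Cᵀ * V := by
    rw [Matrix.transpose_mul, Matrix.transpose_mul, Matrix.transpose_transpose,
      Matrix.mul_assoc]
  rw [h1]
  have h2 : Vᵀ * Cᵀ * V * (Vᵀ * E * V) = Vᵀ * (Cᵀ * E) * V := by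
    simp only [Matrix.mul_assoc]
    rw [← Matrix.mul_assoc V Vᵀ (E * V), hV1, Matrix.one_mul]
  rw [h2, Matrix.trace_mul_comm, ← Matrix.mul_assoc, hV1, Matrix.one_mul]

lemma swap3 {α β γ : Type*} [Fintype α] [Fintype β] [Fintype γ]
    (G : α → β → γ → ℝ) :
    ∑ a, ∑ b, ∑ c, G a b c = ∑ c, ∑ b, ∑ a, G a b c := by
  calc ∑ a, ∑ b, ∑ c, G a b c = ∑ a, ∑ c, ∑ b, G a b c :=
        Finset.sum_congr rfl fun a _ => Finset.sum_comm
    _ = ∑ c, ∑ a, ∑ b, G a b c := Finset.sum_comm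
    _ = ∑ c, ∑ b, ∑ a, G a b c :=
        Finset.sum_congr rfl fun c _ => Finset.sum_comm

/-- Regularized Eckart–Young: for PSD `A = Σ sᵢ uᵢuᵢᵀ` (eigenvalues
descending, `uᵢ` orthonormal) and PSD `B = Σ dᵢ vᵢvᵢᵀ` (eigenvalues ascending,
`vᵢ` orthonormal), `r ≤ n`, the minimum over `Y ∈ ℝ^{n×r}` of
`‖A − YYᵀ‖_F² + 2⟨B, YᵀY⟩` equals `Σ sᵢ² − Σᵢ≤r (max(sᵢ − dᵢ,0))²`, attained at
`Y* = Σᵢ uᵢvᵢᵀ √(max(sᵢ − dᵢ,0))`. -/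
theorem regularized_eckart_young (n r : ℕ) (hr : r ≤ n)
    (s : Fin n → ℝ) (u : Fin n → (Fin n → ℝ))
    (d : Fin r → ℝ) (v : Fin r → (Fin r → ℝ))
    (hs0 : ∀ i, 0 ≤ s i) (hsA : Antitone s)
    (hd0 : ∀ i, 0 ≤ d i) (hdM : Monotone d)
    (hu : ∀ i j, u i ⬝ᵥ u j = if i = j then (1 : ℝ) else 0)
    (hv : ∀ i j, v i ⬝ᵥ v j = if i = j then (1 : ℝ) else 0)
    (A : Matrix (Fin n) (Fin n) ℝ)
    (hA : A = ∑ i, s i • Matrix.vecMulVec (u i) (u i))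
    (B : Matrix (Fin r) (Fin r) ℝ)
    (hB : B = ∑ i, d i • Matrix.vecMulVec (v i) (v i))
    (Ystar : Matrix (Fin n) (Fin r) ℝ)
    (hYstar : Ystar = ∑ i : Fin r,
      Real.sqrt (max (s (Fin.castLE hr i) - d i) 0) •
        Matrix.vecMulVec (u (Fin.castLE hr i)) (v i)) :
    IsLeast {y : ℝ | ∃ Y : Matrix (Fin n) (Fin r) ℝ,
        y = frob2 (A - Y * Yᵀ) + 2 * fip B (Yᵀ * Y)}
      (∑ i, (s i) ^ 2 - ∑ i : Fin r, (max (s (Fin.castLE hr i) - d i) 0) ^ 2) ∧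
    frob2 (A - Ystar * Ystarᵀ) + 2 * fip B (Ystarᵀ * Ystar) =
      ∑ i, (s i) ^ 2 - ∑ i : Fin r, (max (s (Fin.castLE hr i) - d i) 0) ^ 2 := by
  set U : Matrix (Fin n) (Fin n) ℝ := Matrix.of (fun i k => u i k) with hUdef
  set V : Matrix (Fin r) (Fin r) ℝ := Matrix.of (fun i k => v i k) with hVdef
  have hU1 : U * Uᵀ = 1 := by
    ext i j
    rw [Matrix.mul_apply, Matrix.one_apply]
    simpa [hUdef, dotProduct, Matrix.transpose_apply] using hu i j
  have hU2 : Uᵀ * U = 1 := mul_eq_one_comm.mp hU1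
  have hV1 : V * Vᵀ = 1 := by
    ext i j
    rw [Matrix.mul_apply, Matrix.one_apply]
    simpa [hVdef, dotProduct, Matrix.transpose_apply] using hv i j
  have hV2 : Vᵀ * V = 1 := mul_eq_one_comm.mp hV1
  have hAdec : A = Uᵀ * diagonal s * U := by
    ext j k
    rw [hA]
    simp only [Matrix.sum_apply, Matrix.smul_apply, Matrix.vecMulVec_apply, smul_eq_mul]
    rw [Matrix.mul_apply]
    refine Finset.sum_congr rfl fun i _ => ?_
    rw [Matrix.mul_apply, Finset.sum_eq_single i
      (fun t _ ht => by simp [Matrix.diagonal_apply_ne s ht])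
      (by simp)]
    simp [hUdef, Matrix.transpose_apply]
    ring
  have hBdec : B = Vᵀ * diagonal d * V := by
    ext j k
    rw [hB]
    simp only [Matrix.sum_apply, Matrix.smul_apply, Matrix.vecMulVec_apply, smul_eq_mul]
    rw [Matrix.mul_apply]
    refine Finset.sum_congr rfl fun i _ => ?_
    rw [Matrix.mul_apply, Finset.sum_eq_single i
      (fun t _ ht => by simp [Matrix.diagonal_apply_ne d ht])
      (by simp)]
    simp [hVdef, Matrix.transpose_apply]
    ring
  have hsandU : ∀ W : Matrix (Fin n) (Fin n) ℝ, Uᵀ * (U * W * Uᵀ) * U = W := by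
    intro W
    simp only [Matrix.mul_assoc]
    rw [hU2, Matrix.mul_one, ← Matrix.mul_assoc Uᵀ U W, hU2, Matrix.one_mul]
  have hsandV : ∀ W : Matrix (Fin r) (Fin r) ℝ, Vᵀ * (V * W * Vᵀ) * V = W := by
    intro W
    simp only [Matrix.mul_assoc]
    rw [hV2, Matrix.mul_one, ← Matrix.mul_assoc Vᵀ V W, hV2, Matrix.one_mul]
  have transform : ∀ Y : Matrix (Fin n) (Fin r) ℝ,
      frob2 (A - Y * Yᵀ) + 2 * fip B (Yᵀ * Y)
        = frob2 (diagonal s - (U * Y * Vᵀ) * (U * Y * Vᵀ)ᵀ)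
          + 2 * fip (diagonal d) ((U * Y * Vᵀ)ᵀ * (U * Y * Vᵀ)) := by
    intro Y
    have hXXt : (U * Y * Vᵀ) * (U * Y * Vᵀ)ᵀ = U * (Y * Yᵀ) * Uᵀ := by
      rw [Matrix.transpose_mul, Matrix.transpose_mul, Matrix.transpose_transpose]
      simp only [Matrix.mul_assoc]
      rw [← Matrix.mul_assoc Vᵀ V _, hV2, Matrix.one_mul]
    have hXtX : (U * Y * Vᵀ)ᵀ * (U * Y * Vᵀ) = V * (Yᵀ * Y) * Vᵀ := by
      rw [Matrix.transpose_mul, Matrix.transpose_mul, Matrix.transpose_transpose]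
      simp only [Matrix.mul_assoc]
      rw [← Matrix.mul_assoc Uᵀ U _, hU2, Matrix.one_mul]
    have hAY : A - Y * Yᵀ = Uᵀ * (diagonal s - U * (Y * Yᵀ) * Uᵀ) * U := by
      rw [Matrix.mul_sub, Matrix.sub_mul, hsandU, ← hAdec]
    have hfr : frob2 (A - Y * Yᵀ) = frob2 (diagonal s - U * (Y * Yᵀ) * Uᵀ) := by
      rw [hAY, frob2_mulright U hU1, frob2_conj Uᵀ (by rw [Matrix.transpose_transpose]; exact hU1)]
    have hYY : Yᵀ * Y = Vᵀ * (V * (Yᵀ * Y) * Vᵀ) * V := (hsandV _).symm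
    have hfi : fip B (Yᵀ * Y) = fip (diagonal d) (V * (Yᵀ * Y) * Vᵀ) := by
      conv_lhs => rw [hBdec, hYY]
      rw [fip_conj V hV1]
    rw [hfr, hfi, hXXt, hXtX]
  have hXstar : U * Ystar * Vᵀ = Matrix.of fun (i : Fin n) (j : Fin r) =>
      if (i : ℕ) = (j : ℕ) then Real.sqrt (max (s (Fin.castLE hr j) - d j) 0) else 0 := by
    have hYe : ∀ (j : Fin n) (l : Fin r), Ystar j l
        = ∑ i, Real.sqrt (max (s (Fin.castLE hr i) - d i) 0)
            * (u (Fin.castLE hr i) j * v i l) := by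
      intro j l
      rw [hYstar]
      simp only [Matrix.sum_apply, Matrix.smul_apply, Matrix.vecMulVec_apply, smul_eq_mul]
    ext p q
    rw [Matrix.of_apply]
    calc (U * Ystar * Vᵀ) p q
        = ∑ l, ∑ j, ∑ i, Real.sqrt (max (s (Fin.castLE hr i) - d i) 0)
            * ((u p j * u (Fin.castLE hr i) j) * (v i l * v q l)) := by
          rw [Matrix.mul_apply]
          refine Finset.sum_congr rfl fun l _ => ?_
          rw [Matrix.mul_apply, Matrix.transpose_apply, Finset.sum_mul]
          refine Finset.sum_congr rfl fun j _ => ?_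
          rw [hYe j l, Finset.mul_sum, Finset.sum_mul]
          refine Finset.sum_congr rfl fun i _ => ?_
          rw [hUdef, hVdef]
          simp only [Matrix.of_apply]
          ring
      _ = ∑ i, Real.sqrt (max (s (Fin.castLE hr i) - d i) 0)
            * ((∑ j, u p j * u (Fin.castLE hr i) j) * (∑ l, v i l * v q l)) := by
          rw [swap3]
          refine Finset.sum_congr rfl fun i _ => ?_
          rw [Finset.sum_mul_sum, Finset.mul_sum]
          refine Finset.sum_congr rfl fun j _ => ?_
          rw [Finset.mul_sum]
      _ = if (p : ℕ) = (q : ℕ) then Real.sqrt (max (s (Fin.castLE hr q) - d q) 0) else 0 := by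
          have hud : ∀ i, (∑ j, u p j * u (Fin.castLE hr i) j)
              = if p = Fin.castLE hr i then (1:ℝ) else 0 := by
            intro i; simpa [dotProduct] using hu p (Fin.castLE hr i)
          have hvd : ∀ i, (∑ l, v i l * v q l) = if i = q then (1:ℝ) else 0 := by
            intro i; simpa [dotProduct] using hv i q
          rw [Finset.sum_congr rfl fun i (_ : i ∈ univ) => by rw [hud i, hvd i]]
          rw [Finset.sum_eq_single q
            (fun i _ hi => by rw [if_neg hi, mul_zero, mul_zero])
            (by simp)]
          rw [if_pos rfl, mul_one]
          split_ifs with h h2 h3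
          · rw [mul_one]
          · exact absurd (show (p : ℕ) = (q : ℕ) by rw [h]; simp) h2
          · exact absurd (Fin.ext (show (p : ℕ) = ((Fin.castLE hr q : Fin n) : ℕ) by
              simpa using h3)) h
          · rw [mul_zero]
  have hval : frob2 (A - Ystar * Ystarᵀ) + 2 * fip B (Ystarᵀ * Ystar) =
      ∑ i, (s i) ^ 2 - ∑ i : Fin r, (max (s (Fin.castLE hr i) - d i) 0) ^ 2 := by
    rw [transform Ystar, hXstar]
    exact diag_eq hr s d
  refine ⟨⟨⟨Ystar, hval.symm⟩, ?_⟩, hval⟩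
  rintro y ⟨Y, rfl⟩
  rw [transform Y]
  exact diag_lb hr s d hs0 hsA hd0 hdM (U * Y * Vᵀ)
end

section
/- Let X ∈ ℝ^{n×r} satisfy (S − XXᵀ)X = XD where S is real symmetric n×n and D is real diagonal r×r. Then there exists Y ∈ ℝ^{n×r} with YᵀY diagonal such that (S − YYᵀ)Y = YD, YYᵀ = XXᵀ, and ⟨D, YᵀY⟩ = ⟨D, XᵀX⟩. -/
open Matrix

section Aux

variable {ι : Type*} [Fintype ι] [DecidableEq ι]

/-- Spectral theorem packaged: a real symmetric matrix is diagonalized by an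
orthogonal matrix. -/
lemma exists_orth_diag (A : Matrix ι ι ℝ) (hA : A.IsHermitian) :
    ∃ U : Matrix ι ι ℝ, Uᵀ * U = 1 ∧ (Uᵀ * A * U).IsDiag := by
  set U : Matrix ι ι ℝ := (hA.eigenvectorUnitary : Matrix ι ι ℝ) with hU
  have hstar : star U = Uᵀ := by
    ext i j
    simp [Matrix.star_eq_conjTranspose, Matrix.conjTranspose_apply]
  have hUU : Uᵀ * U = 1 := by
    rw [← hstar]
    exact Matrix.mem_unitaryGroup_iff'.mp hA.eigenvectorUnitary.2
  refine ⟨U, hUU, ?_⟩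
  have hspec := hA.spectral_theorem
  rw [Unitary.conjStarAlgAut_apply, ← hU, hstar] at hspec
  rw [hspec]
  have : Uᵀ * (U * Matrix.diagonal (RCLike.ofReal ∘ hA.eigenvalues) * Uᵀ) * U
      = (Uᵀ * U) * Matrix.diagonal (RCLike.ofReal ∘ hA.eigenvalues) * (Uᵀ * U) := by
    noncomm_ring
  rw [this, hUU, one_mul, mul_one]
  exact Matrix.isDiag_diagonal _

/-- A real symmetric matrix commuting with a diagonal matrix can be diagonalized by an
orthogonal matrix commuting with the diagonal matrix. -/
lemma exists_orth_diag_comm (A D : Matrix ι ι ℝ) (hA : Aᵀ = A) (hD : D.IsDiag)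
    (hcomm : A * D = D * A) :
    ∃ V : Matrix ι ι ℝ, Vᵀ * V = 1 ∧ V * D = D * V ∧ (Vᵀ * A * V).IsDiag := by
  classical
  set d : ι → ℝ := fun i => D i i with hd
  have hDdiag : D = Matrix.diagonal d := hD.diagonal_diag.symm
  -- off-"block" entries of A vanish
  have hA0 : ∀ i j, d i ≠ d j → A i j = 0 := by
    intro i j hij
    have h1 : A i j * d j = d i * A i j := by
      have := congrFun (congrFun hcomm i) j
      rwa [hDdiag, Matrix.mul_diagonal, Matrix.diagonal_mul] at this
    have h2 : A i j * (d j - d i) = 0 := by rw [mul_sub, h1]; ring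
    rcases mul_eq_zero.mp h2 with h | h
    · exact h
    · exact absurd (by linarith : d i = d j) hij
  set κ := Set.range d with hκ
  set f : ι → κ := fun i => ⟨d i, Set.mem_range_self i⟩ with hf
  set e : (Σ c : κ, {i // f i = c}) ≃ ι := Equiv.sigmaFiberEquiv f with he
  -- blocks of A
  set B : ∀ c : κ, Matrix {i // f i = c} {i // f i = c} ℝ :=
    fun c => fun i j => A i.1 j.1 with hB
  have hBsymm : ∀ c, (B c).IsHermitian := by
    intro c
    ext i j
    simp only [Matrix.conjTranspose_apply, star_trivial]
    exact congrFun (congrFun hA i.1) j.1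
  choose U hU1 hU2 using fun c => exists_orth_diag (B c) (hBsymm c)
  set W : Matrix (Σ c : κ, {i // f i = c}) (Σ c : κ, {i // f i = c}) ℝ :=
    Matrix.blockDiagonal' U with hW
  -- A and D in block coordinates
  have hAblock : A.submatrix e e = Matrix.blockDiagonal' B := by
    ext ⟨c, i⟩ ⟨c', j⟩
    by_cases hcc : c = c'
    · subst hcc
      rw [Matrix.blockDiagonal'_apply_eq]
      rfl
    · rw [Matrix.blockDiagonal'_apply_ne _ _ _ hcc]
      have hi : d i.1 = (c : ℝ) := congrArg Subtype.val i.2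
      have hj : d j.1 = (c' : ℝ) := congrArg Subtype.val j.2
      have hne : d i.1 ≠ d j.1 := by
        rw [hi, hj]; exact fun hcv => hcc (Subtype.ext hcv)
      exact hA0 i.1 j.1 hne
  set Dblk : ∀ c : κ, Matrix {i // f i = c} {i // f i = c} ℝ :=
    fun c => (c : ℝ) • (1 : Matrix {i // f i = c} {i // f i = c} ℝ) with hDblk
  have hDblock : D.submatrix e e = Matrix.blockDiagonal' Dblk := by
    ext ⟨c, i⟩ ⟨c', j⟩
    by_cases hcc : c = c'
    · subst hcc
      rw [Matrix.blockDiagonal'_apply_eq]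
      by_cases hij : i = j
      · subst hij
        have hi : d i.1 = (c : ℝ) := congrArg Subtype.val i.2
        show D i.1 i.1 = ((c : ℝ) • (1 : Matrix {i // f i = c} {i // f i = c} ℝ)) i i
        simp only [Matrix.smul_apply, Matrix.one_apply_eq, smul_eq_mul, mul_one]
        exact hi
      · have hij' : i.1 ≠ j.1 := fun hh => hij (Subtype.ext hh)
        show D i.1 j.1 = ((c : ℝ) • (1 : Matrix {i // f i = c} {i // f i = c} ℝ)) i j
        simp only [Matrix.smul_apply, Matrix.one_apply_ne hij, smul_eq_mul, mul_zero]
        exact hD hij' 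
    · rw [Matrix.blockDiagonal'_apply_ne _ _ _ hcc]
      have hij : i.1 ≠ j.1 := by
        intro hval
        apply hcc
        rw [← i.2, ← j.2, hval]
      exact hD hij
  set V : Matrix ι ι ℝ := W.submatrix e.symm e.symm with hV
  have key : ∀ M N : Matrix (Σ c : κ, {i // f i = c}) (Σ c : κ, {i // f i = c}) ℝ,
      (M.submatrix e.symm e.symm) * (N.submatrix e.symm e.symm)
        = (M * N).submatrix e.symm e.symm := by
    intro M N
    exact Matrix.submatrix_mul_equiv M N _ e.symm _
  have hWt : Wᵀ = Matrix.blockDiagonal' (fun c => (U c)ᵀ) := Matrix.blockDiagonal'_transpose U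
  have hVt : Vᵀ = (Wᵀ).submatrix e.symm e.symm := (Matrix.transpose_submatrix W _ _).symm
  have hA' : A = (Matrix.blockDiagonal' B).submatrix e.symm e.symm := by
    rw [← hAblock]
    simp [Matrix.submatrix_submatrix]
  have hD' : D = (Matrix.blockDiagonal' Dblk).submatrix e.symm e.symm := by
    rw [← hDblock]
    simp [Matrix.submatrix_submatrix]
  refine ⟨V, ?_, ?_, ?_⟩
  · rw [hVt, hV, key, hWt, hW, ← Matrix.blockDiagonal'_mul]
    have h1 : Matrix.blockDiagonal' (fun c => (U c)ᵀ * U c) = 1 := by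
      rw [show (fun c => (U c)ᵀ * U c)
          = (1 : ∀ c : κ, Matrix {i // f i = c} {i // f i = c} ℝ) from funext fun c => hU1 c,
        Matrix.blockDiagonal'_one]
    rw [h1, Matrix.submatrix_one_equiv]
  · rw [hV, hD', key, key, hW, ← Matrix.blockDiagonal'_mul, ← Matrix.blockDiagonal'_mul]
    have : (fun c => U c * Dblk c) = fun c => Dblk c * U c := by
      funext c
      simp [hDblk, Matrix.mul_smul, Matrix.smul_mul]
    rw [this]
  · rw [hVt, hV, hA', key, key, hWt, hW, ← Matrix.blockDiagonal'_mul,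
      ← Matrix.blockDiagonal'_mul]
    refine Matrix.IsDiag.submatrix ?_ e.symm.injective
    rintro ⟨c, i⟩ ⟨c', j⟩ hne
    by_cases hcc : c = c'
    · subst hcc
      rw [Matrix.blockDiagonal'_apply_eq]
      have hij : i ≠ j := fun h => hne (by rw [h])
      exact hU2 c hij
    · exact Matrix.blockDiagonal'_apply_ne _ _ _ hcc

end Aux

/-- if `(S − XXᵀ)X = XD` with `S` symmetric and `D` diagonal, then
there is `Y` with `YᵀY` diagonal, `(S − YYᵀ)Y = YD`, `YYᵀ = XXᵀ`, and
`⟨D, YᵀY⟩ = ⟨D, XᵀX⟩`. -/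
theorem exists_diag_gram (n r : ℕ) (X : Matrix (Fin n) (Fin r) ℝ)
    (S : Matrix (Fin n) (Fin n) ℝ) (D : Matrix (Fin r) (Fin r) ℝ)
    (hS : S.IsSymm) (hD : D.IsDiag)
    (h : (S - X * Xᵀ) * X = X * D) :
    ∃ Y : Matrix (Fin n) (Fin r) ℝ, (Yᵀ * Y).IsDiag ∧
      (S - Y * Yᵀ) * Y = Y * D ∧ Y * Yᵀ = X * Xᵀ ∧
      (Dᵀ * (Yᵀ * Y)).trace = (Dᵀ * (Xᵀ * X)).trace := by
  set A : Matrix (Fin r) (Fin r) ℝ := Xᵀ * X with hA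
  have hAsymm : Aᵀ = A := by
    rw [hA, Matrix.transpose_mul, Matrix.transpose_transpose]
  have hDt : Dᵀ = D := hD.isSymm
  have hSt : Sᵀ = S := hS
  have hAD : A * D = Xᵀ * S * X - A * A := by
    calc A * D = Xᵀ * (X * D) := by rw [hA, Matrix.mul_assoc]
      _ = Xᵀ * ((S - X * Xᵀ) * X) := by rw [h]
      _ = Xᵀ * S * X - A * A := by
          rw [hA]
          simp only [Matrix.sub_mul, Matrix.mul_sub, Matrix.mul_assoc]
  have hADsymm : (A * D)ᵀ = A * D := by
    rw [hAD]
    simp only [Matrix.transpose_sub, Matrix.transpose_mul, Matrix.transpose_transpose, hSt,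
      hAsymm, Matrix.mul_assoc]
  have hcomm : A * D = D * A := by
    conv_lhs => rw [← hADsymm]
    rw [Matrix.transpose_mul, hDt, hAsymm]
  obtain ⟨V, hV1, hV2, hV3⟩ := exists_orth_diag_comm A D hAsymm hD hcomm
  have hV1' : V * Vᵀ = 1 := mul_eq_one_comm.mp hV1
  refine ⟨X * V, ?_, ?_, ?_, ?_⟩
  · have : (X * V)ᵀ * (X * V) = Vᵀ * A * V := by
      rw [Matrix.transpose_mul, hA]
      simp only [Matrix.mul_assoc]
    rw [this]; exact hV3
  · have hYY : (X * V) * (X * V)ᵀ = X * Xᵀ := by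
      rw [Matrix.transpose_mul]
      calc X * V * (Vᵀ * Xᵀ) = X * (V * Vᵀ * Xᵀ) := by simp only [Matrix.mul_assoc]
        _ = X * Xᵀ := by rw [hV1', Matrix.one_mul]
    rw [hYY]
    calc (S - X * Xᵀ) * (X * V) = ((S - X * Xᵀ) * X) * V := by rw [Matrix.mul_assoc]
      _ = X * D * V := by rw [h]
      _ = X * (V * D) := by rw [Matrix.mul_assoc, hV2]
      _ = X * V * D := by rw [Matrix.mul_assoc]
  · rw [Matrix.transpose_mul]
    calc X * V * (Vᵀ * Xᵀ) = X * (V * Vᵀ * Xᵀ) := by simp only [Matrix.mul_assoc]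
      _ = X * Xᵀ := by rw [hV1', Matrix.one_mul]
  · have hYtY : (X * V)ᵀ * (X * V) = Vᵀ * A * V := by
      rw [Matrix.transpose_mul, hA]
      simp only [Matrix.mul_assoc]
    rw [hYtY, hDt]
    calc (D * (Vᵀ * A * V)).trace = ((Vᵀ * A * V) * D).trace := Matrix.trace_mul_comm _ _
      _ = ((Vᵀ * A) * (V * D)).trace := by rw [mul_assoc]
      _ = ((Vᵀ * A) * (D * V)).trace := by rw [hV2]
      _ = ((Vᵀ * (A * D)) * V).trace := by noncomm_ring
      _ = (V * (Vᵀ * (A * D))).trace := Matrix.trace_mul_comm _ _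
      _ = ((V * Vᵀ) * (A * D)).trace := by rw [mul_assoc]
      _ = (A * D).trace := by rw [hV1', one_mul]
      _ = (D * A).trace := by rw [hcomm]
end

section
/- Let X ∈ ℝ^{n×r} satisfy SX = X(D + XᵀX) where S is an n×n real diagonal matrix and both D and XᵀX are r×r real diagonal matrices. Then there exists a generalized permutation matrix Y ∈ ℝ^{n×r} satisfying SY = Y(D + YᵀY), with YᵀY = XᵀX and ⟨S, YYᵀ⟩ = ⟨S, XXᵀ⟩. -/
open Matrix

/-- A generalized permutation matrix: at most one nonzero entry per row and
at most one nonzero entry per column. -/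
def IsGenPerm {n r : ℕ} (Y : Matrix (Fin n) (Fin r) ℝ) : Prop :=
  (∀ i j j', Y i j ≠ 0 → Y i j' ≠ 0 → j = j') ∧
  (∀ i i' j, Y i j ≠ 0 → Y i' j ≠ 0 → i = i')

lemma aux_card {n r : ℕ} (X : Matrix (Fin n) (Fin r) ℝ) (hXX : (Xᵀ * X).IsDiag)
    (P : Fin n → Prop) (Q : Fin r → Prop) [DecidablePred P] [DecidablePred Q]
    (h0 : ∀ j, Q j → (Xᵀ * X) j j ≠ 0)
    (hsupp : ∀ i j, Q j → X i j ≠ 0 → P i) :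
    Fintype.card {j // Q j} ≤ Fintype.card {i // P i} := by
  classical
  set M : Matrix {i // P i} {j // Q j} ℝ := fun i j => X i.1 j.1 with hM
  have key : Mᵀ * M = Matrix.diagonal (fun j : {j // Q j} => (Xᵀ * X) j.1 j.1) := by
    ext j j'
    have h1 : (Mᵀ * M) j j' = ∑ i ∈ Finset.univ.filter P, X i j.1 * X i j'.1 := by
      rw [Matrix.mul_apply]
      simp only [hM, Matrix.transpose_apply]
      exact (Finset.sum_subtype (Finset.univ.filter P) (fun i => by simp)
        (fun i => X i j.1 * X i j'.1)).symm
    have h2 : ∑ i ∈ Finset.univ.filter P, X i j.1 * X i j'.1 = ∑ i, X i j.1 * X i j'.1 := by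
      apply Finset.sum_filter_of_ne
      intro i _ hne
      have : X i j.1 ≠ 0 := fun hz => hne (by rw [hz, zero_mul])
      exact hsupp i j.1 j.2 this
    have h3 : ∑ i, X i j.1 * X i j'.1 = (Xᵀ * X) j.1 j'.1 := by
      simp [Matrix.mul_apply]
    rw [h1, h2, h3]
    by_cases hjj : j = j'
    · subst hjj; simp [Matrix.diagonal_apply_eq]
    · rw [Matrix.diagonal_apply_ne _ hjj]
      exact hXX (fun hval => hjj (Subtype.ext hval))
  have h1 : (Mᵀ * M).rank = Fintype.card {j // Q j} := by
    rw [key, Matrix.rank_of_isUnit]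
    apply (Matrix.isUnit_iff_isUnit_det _).2
    rw [Matrix.det_diagonal]
    exact (Finset.prod_ne_zero_iff.2 (fun j _ => h0 j.1 j.2)).isUnit
  calc Fintype.card {j // Q j} = M.rank := by rw [← h1, Matrix.rank_transpose_mul_self]
    _ ≤ Fintype.card {i // P i} := Matrix.rank_le_card_height M

/-- if `SX = X(D + XᵀX)` with `S` diagonal and `D`, `XᵀX` diagonal,
then there is a generalized permutation `Y` with `SY = Y(D + YᵀY)`,
`YᵀY = XᵀX`, and `⟨S, YYᵀ⟩ = ⟨S, XXᵀ⟩`. -/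
theorem exists_gen_perm_solution (n r : ℕ) (X : Matrix (Fin n) (Fin r) ℝ)
    (S : Matrix (Fin n) (Fin n) ℝ) (D : Matrix (Fin r) (Fin r) ℝ)
    (hS : S.IsDiag) (hD : D.IsDiag) (hXX : (Xᵀ * X).IsDiag)
    (h : S * X = X * (D + Xᵀ * X)) :
    ∃ Y : Matrix (Fin n) (Fin r) ℝ, IsGenPerm Y ∧
      S * Y = Y * (D + Yᵀ * Y) ∧ Yᵀ * Y = Xᵀ * X ∧
      (Sᵀ * (Y * Yᵀ)).trace = (Sᵀ * (X * Xᵀ)).trace := by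
  classical
  set s : Fin n → ℝ := fun i => S i i with hsdef
  set d : Fin r → ℝ := fun j => D j j with hddef
  set c : Fin r → ℝ := fun j => (Xᵀ * X) j j with hcdef
  -- diagonal multiplication lemmas
  have hSmul : ∀ (M : Matrix (Fin n) (Fin r) ℝ) i j, (S * M) i j = s i * M i j := by
    intro M i j
    rw [Matrix.mul_apply]
    rw [Finset.sum_eq_single i]
    · intro k _ hk
      rw [hS (Ne.symm hk), zero_mul]
    · intro hi; exact absurd (Finset.mem_univ i) hi
  have hDmul : ∀ (M : Matrix (Fin n) (Fin r) ℝ) i j,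
      (M * (D + Xᵀ * X)) i j = M i j * (d j + c j) := by
    intro M i j
    rw [Matrix.mul_apply]
    rw [Finset.sum_eq_single j]
    · simp [Matrix.add_apply, hddef, hcdef]
    · intro k _ hk
      have : (D + Xᵀ * X) k j = 0 := by
        simp [Matrix.add_apply, hD hk, hXX hk]
      rw [this, mul_zero]
    · intro hj; exact absurd (Finset.mem_univ j) hj
  have hentry : ∀ i j, X i j ≠ 0 → s i = d j + c j := by
    intro i j hij
    have h1 := congrFun (congrFun h i) j
    rw [hSmul X i j, hDmul X i j, mul_comm (X i j)] at h1
    exact mul_right_cancel₀ hij h1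
  have hc : ∀ j, c j = ∑ i, X i j * X i j := by
    intro j; simp [hcdef, Matrix.mul_apply]
  have hc0 : ∀ j, 0 ≤ c j := by
    intro j; rw [hc]
    exact Finset.sum_nonneg (fun i _ => mul_self_nonneg _)
  rcases Nat.eq_zero_or_pos n with hn | hn
  · -- n = 0 : take Y = 0
    subst hn
    have hX0 : Xᵀ * X = 0 := by
      ext j j'
      rw [Matrix.mul_apply]
      exact Finset.sum_of_isEmpty _
    refine ⟨0, ⟨fun i j j' hj _ => absurd rfl hj, fun i i' j hj _ => absurd rfl hj⟩,
      by simp, by simp [hX0], by simp⟩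
  have hnne : Nonempty (Fin n) := ⟨⟨0, hn⟩⟩
  -- pick, for each value v, an injective assignment of rows
  have hv : ∀ v : ℝ, ∃ g : Fin r → Fin n,
      Set.InjOn g {j | c j ≠ 0 ∧ d j + c j = v} ∧
      ∀ j, c j ≠ 0 → d j + c j = v → s (g j) = v := by
    intro v
    have hcard : Fintype.card {j // c j ≠ 0 ∧ d j + c j = v} ≤ Fintype.card {i // s i = v} := by
      apply aux_card X hXX
      · intro j hj; exact hj.1
      · intro i j hj hij
        exact (hentry i j hij).trans hj.2
    obtain ⟨e⟩ := Function.Embedding.nonempty_of_card_le hcard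
    refine ⟨fun j => if hj : c j ≠ 0 ∧ d j + c j = v then (e ⟨j, hj⟩).1
        else Classical.arbitrary (Fin n), ?_, ?_⟩
    · intro j hj j' hj' hee
      simp only [Set.mem_setOf_eq] at hj hj'
      simp only [dif_pos hj, dif_pos hj'] at hee
      have := e.injective (Subtype.ext hee)
      exact congrArg Subtype.val this
    · intro j h1 h2
      simp only [dif_pos (And.intro h1 h2)]
      exact (e ⟨j, ⟨h1, h2⟩⟩).2
  choose g hginj hgmem using hv
  set f : Fin r → Fin n := fun j => g (d j + c j) j with hf
  have hfs : ∀ j, c j ≠ 0 → s (f j) = d j + c j := fun j hj => hgmem _ j hj rfl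
  have hfinj : ∀ j j', c j ≠ 0 → c j' ≠ 0 → f j = f j' → j = j' := by
    intro j j' hj hj' hff
    have hvv : d j' + c j' = d j + c j := by
      rw [← hfs j hj, ← hfs j' hj', hff]
    have hff' : g (d j + c j) j = g (d j + c j) j' := by
      have h0 : g (d j + c j) j = g (d j' + c j') j' := hff
      rwa [hvv] at h0
    exact hginj (d j + c j) ⟨hj, rfl⟩ ⟨hj', hvv⟩ hff'
  -- define Y
  set Y : Matrix (Fin n) (Fin r) ℝ :=
    fun i j => if c j ≠ 0 ∧ f j = i then Real.sqrt (c j) else 0 with hYdef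
  have hYne : ∀ i j, Y i j ≠ 0 → c j ≠ 0 ∧ f j = i := by
    intro i j hij
    by_contra hcon
    exact hij (if_neg hcon)
  -- Yᵀ Y = Xᵀ X
  have hYYX : Yᵀ * Y = Xᵀ * X := by
    ext j j'
    rw [Matrix.mul_apply]
    simp only [Matrix.transpose_apply]
    by_cases hjj : j = j'
    · subst hjj
      by_cases hcj : c j = 0
      · have : ∀ i, Y i j = 0 := by
          intro i
          apply if_neg
          intro hcon; exact hcon.1 hcj
        simp only [this, mul_zero, Finset.sum_const_zero]
        exact hcj.symm
      · rw [Finset.sum_eq_single (f j)]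
        · have : Y (f j) j = Real.sqrt (c j) := if_pos ⟨hcj, rfl⟩
          rw [this, Real.mul_self_sqrt (hc0 j)]
        · intro i _ hi
          have : Y i j = 0 := if_neg (fun hcon => hi hcon.2.symm)
          rw [this, zero_mul]
        · intro hi; exact absurd (Finset.mem_univ _) hi
    · have hz : ∀ i, Y i j * Y i j' = 0 := by
        intro i
        by_contra hcon
        have h1 : Y i j ≠ 0 := fun hz => hcon (by rw [hz, zero_mul])
        have h2 : Y i j' ≠ 0 := fun hz => hcon (by rw [hz, mul_zero])
        obtain ⟨hc1, hf1⟩ := hYne i j h1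
        obtain ⟨hc2, hf2⟩ := hYne i j' h2
        exact hjj (hfinj j j' hc1 hc2 (hf1.trans hf2.symm))
      rw [Finset.sum_eq_zero (fun i _ => hz i)]
      exact (hXX hjj).symm
  have hYdiag : ∀ j, ∑ i, Y i j * Y i j = c j := by
    intro j
    have := congrFun (congrFun hYYX j) j
    rw [Matrix.mul_apply] at this
    simpa [Matrix.transpose_apply, ← hcdef] using this
  refine ⟨Y, ⟨?_, ?_⟩, ?_, hYYX, ?_⟩
  · -- one nonzero per row
    intro i j j' hj hj'
    obtain ⟨hc1, hf1⟩ := hYne i j hj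
    obtain ⟨hc2, hf2⟩ := hYne i j' hj'
    exact hfinj j j' hc1 hc2 (hf1.trans hf2.symm)
  · -- one nonzero per column
    intro i i' j hj hj'
    obtain ⟨_, hf1⟩ := hYne i j hj
    obtain ⟨_, hf2⟩ := hYne i' j hj'
    exact hf1.symm.trans hf2
  · -- S Y = Y (D + Yᵀ Y)
    rw [hYYX]
    ext i j
    rw [hSmul Y i j, hDmul Y i j]
    by_cases hy : Y i j = 0
    · rw [hy, mul_zero, zero_mul]
    · obtain ⟨hcj, hfj⟩ := hYne i j hy
      rw [← hfj, hfs j hcj, mul_comm]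
  · -- traces agree
    have htr : ∀ (M : Matrix (Fin n) (Fin r) ℝ),
        (Sᵀ * (M * Mᵀ)).trace = ∑ j, ∑ i, s i * (M i j * M i j) := by
      intro M
      rw [Matrix.trace]
      have hdiagel : ∀ i, (Sᵀ * (M * Mᵀ)) i i = s i * ∑ j, M i j * M i j := by
        intro i
        rw [Matrix.mul_apply]
        rw [Finset.sum_eq_single i]
        · rw [Matrix.transpose_apply, Matrix.mul_apply]
          simp [Matrix.transpose_apply, Finset.mul_sum, hsdef]
        · intro k _ hk
          rw [Matrix.transpose_apply, hS hk, zero_mul]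
        · intro hi; exact absurd (Finset.mem_univ i) hi
      calc ∑ i, (Sᵀ * (M * Mᵀ)).diag i = ∑ i, ∑ j, s i * (M i j * M i j) := by
            apply Finset.sum_congr rfl
            intro i _
            rw [Matrix.diag_apply, hdiagel i, Finset.mul_sum]
        _ = ∑ j, ∑ i, s i * (M i j * M i j) := Finset.sum_comm
    have hcol : ∀ (M : Matrix (Fin n) (Fin r) ℝ),
        (∀ i j, M i j ≠ 0 → s i = d j + c j) → (∀ j, ∑ i, M i j * M i j = c j) →
        ∑ j, ∑ i, s i * (M i j * M i j) = ∑ j, (d j + c j) * c j := by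
      intro M hM1 hM2
      apply Finset.sum_congr rfl
      intro j _
      have : ∀ i, s i * (M i j * M i j) = (d j + c j) * (M i j * M i j) := by
        intro i
        by_cases hm : M i j = 0
        · rw [hm]; ring
        · rw [hM1 i j hm]
      calc ∑ i, s i * (M i j * M i j) = ∑ i, (d j + c j) * (M i j * M i j) :=
            Finset.sum_congr rfl (fun i _ => this i)
        _ = (d j + c j) * ∑ i, M i j * M i j := by rw [Finset.mul_sum]
        _ = (d j + c j) * c j := by rw [hM2 j]
    rw [htr X, htr Y]
    rw [hcol Y (fun i j hm => by
          obtain ⟨hcj, hfj⟩ := hYne i j hm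
          rw [← hfj]; exact hfs j hcj) hYdiag,
        hcol X hentry (fun j => (hc j).symm)]
end

section
/- Given s₁ ≥ s₂ ≥ ⋯ ≥ s_r ≥ 0 and 0 ≤ d₁ ≤ d₂ ≤ ⋯ ≤ d_r, for every permutation π of {1,…,r} one has Σᵢ (max(s_{π(i)} − dᵢ, 0))² ≤ Σᵢ (max(sᵢ − dᵢ, 0))²; i.e., the sum Σᵢ (s_{π(i)} − dᵢ)₊² is maximized by pairing the largest s with the smallest d (natural ordering). -/
open Equiv Equiv.Perm Finset Function

/-- Exchange inequality for the positive-part-squared cost. -/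
lemma exch_pos_part {A B c e : ℝ} (hAB : B ≤ A) (hce : c ≤ e) :
    max (A - e) 0 ^ 2 + max (B - c) 0 ^ 2 ≤ max (A - c) 0 ^ 2 + max (B - e) 0 ^ 2 := by
  rcases le_total (A - e) 0 with h1 | h1 <;> rcases le_total (B - e) 0 with h2 | h2 <;>
    rcases le_total (A - c) 0 with h3 | h3 <;> rcases le_total (B - c) 0 with h4 | h4 <;>
    simp_all [max_eq_left, max_eq_right] <;> nlinarith

/-- rearrangement: with `s` descending and `d` ascending (both
nonnegative), `Σᵢ (s_{π(i)} − dᵢ)₊²` is maximized by the natural pairing. -/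
theorem rearrangement_pos_part (r : ℕ) (s d : Fin r → ℝ)
    (hs : ∀ i, 0 ≤ s i) (hd : ∀ i, 0 ≤ d i)
    (hsA : Antitone s) (hdM : Monotone d) (π : Equiv.Perm (Fin r)) :
    ∑ i, (max (s (π i) - d i) 0) ^ 2 ≤ ∑ i, (max (s i - d i) 0) ^ 2 := by
  classical
  set F : Fin r → Fin r → ℝ := fun i j => max (s j - d i) 0 ^ 2 with hF
  have key : ∀ (t : Finset (Fin r)), ∀ {σ : Equiv.Perm (Fin r)}, {x | σ x ≠ x} ⊆ ↑t →
      ∑ i ∈ t, F i (σ i) ≤ ∑ i ∈ t, F i i := by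
    intro t
    apply Finset.induction_on_max_value (fun i => toLex (d i, -s i))
      (motive := fun t => ∀ {σ : Equiv.Perm (Fin r)}, {x | σ x ≠ x} ⊆ ↑t →
        ∑ i ∈ t, F i (σ i) ≤ ∑ i ∈ t, F i i) t
    · simp only [le_rfl, Finset.sum_empty, imp_true_iff]
    intro a t has hamax hind σ hσ
    set τ : Equiv.Perm (Fin r) := σ.trans (swap a (σ a)) with hτ
    have hτs : {x | τ x ≠ x} ⊆ ↑t := by
      intro x hx
      simp only [τ, Ne, Set.mem_setOf_eq, Equiv.coe_trans, Equiv.swap_comp_apply] at hx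
      split_ifs at hx with h₁ h₂
      · obtain rfl | hax := eq_or_ne x a
        · contradiction
        · exact mem_of_mem_insert_of_ne (hσ fun h => hax <| h.symm.trans h₁) hax
      · exact (hx <| σ.injective h₂.symm).elim
      · exact mem_of_mem_insert_of_ne (hσ hx) (ne_of_apply_ne _ h₂)
    specialize hind hτs
    simp_rw [sum_insert has]
    refine le_trans ?_ (add_le_add_right hind _)
    obtain hσa | hσa := eq_or_ne a (σ a)
    · rw [hτ, ← hσa, swap_self, trans_refl]
    have h1s : σ⁻¹ a ∈ t := by
      rw [Ne, ← inv_eq_iff_eq] at hσa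
      refine mem_of_mem_insert_of_ne (hσ fun h => hσa ?_) hσa
      rwa [(show ∀ x, σ (σ⁻¹ x) = x from σ.apply_symm_apply), eq_comm] at h
    have h2s : σ a ∈ t := mem_of_mem_insert_of_ne (hσ <| σ.injective.ne hσa.symm) hσa.symm
    simp only [← t.sum_erase_add _ h1s, add_comm]
    rw [← add_assoc, ← add_assoc]
    simp only [hτ, swap_apply_left, Function.comp_apply, Equiv.coe_trans, (show ∀ x, σ (σ⁻¹ x) = x from σ.apply_symm_apply)]
    have hd1 : d (σ⁻¹ a) ≤ d a := by
      have := hamax (σ⁻¹ a) h1s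
      rw [Prod.Lex.le_iff] at this
      rcases this with h | h
      · exact h.le
      · exact h.1.le
    have hs1 : s a ≤ s (σ a) := by
      have := hamax (σ a) h2s
      rw [Prod.Lex.le_iff] at this
      rcases this with h | h
      · have hlt : σ a < a := by
          by_contra hle
          push_neg at hle
          exact absurd (hdM hle) (not_le.2 h)
        exact hsA hlt.le
      · simpa using h.2
    refine add_le_add ?_ (sum_congr rfl fun x hx => ?_).le
    · have := exch_pos_part hs1 hd1
      simp only [hF]
      linarith
    · rw [mem_erase, Ne, eq_inv_iff_eq] at hx
      rw [swap_apply_of_ne_of_ne hx.1 (σ.injective.ne _)]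
      rintro rfl
      exact has hx.2
  have h := key Finset.univ (σ := π) (by simp)
  simpa [hF] using h
end

section
/- For parameters t = r*/r ∈ (0,1] define γ(α,β) = √(1−α²) if β ≥ α/(1+√(1−α²)), and γ(α,β) = (1 − 2αβ + β²)/(1 − β²) if β ≤ α/(1+√(1−α²)). Then the minimum of γ(α,β) over α, β ≥ 0 subject to α² + (1/t)·min{α², β²} ≤ 1 equals 1/(1+√t). -/
set_option maxHeartbeats 1600000 in
/-- for `t ∈ (0,1]`, the minimum of the two-branch function
`γ(α,β)` over `α, β ≥ 0` subject to the valid inequality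
`α² + (1/t)·min{α², β²} ≤ 1` equals `1/(1 + √t)`. -/
theorem min_gamma_valid_inequality (t : ℝ) (ht0 : 0 < t) (ht1 : t ≤ 1)
    (γ : ℝ → ℝ → ℝ)
    (hγ : ∀ α β : ℝ, γ α β =
      if α / (1 + Real.sqrt (1 - α ^ 2)) ≤ β
      then Real.sqrt (1 - α ^ 2)
      else (1 - 2 * α * β + β ^ 2) / (1 - β ^ 2)) :
    IsLeast {y : ℝ | ∃ α β : ℝ, 0 ≤ α ∧ 0 ≤ β ∧
        α ^ 2 + (1 / t) * min (α ^ 2) (β ^ 2) ≤ 1 ∧ y = γ α β}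
      (1 / (1 + Real.sqrt t)) := by
  set s := Real.sqrt t with hsdef
  have hs0 : 0 < s := Real.sqrt_pos.mpr ht0
  have hs2 : s ^ 2 = t := Real.sq_sqrt ht0.le
  clear_value s
  have hs1 : s ≤ 1 := by nlinarith
  constructor
  · -- membership
    set d := Real.sqrt (s ^ 2 + 2 * s + 2) with hddef
    have hd2 : d ^ 2 = s ^ 2 + 2 * s + 2 := Real.sq_sqrt (by nlinarith)
    have hd0 : 0 < d := Real.sqrt_pos.mpr (by nlinarith)
    clear_value d
    have hsd : s < d := by nlinarith
    have hdne : d ≠ 0 := ne_of_gt hd0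
    have hsne : s ≠ 0 := ne_of_gt hs0
    refine ⟨(1 + s) / d, s / d, by positivity, by positivity, ?_, ?_⟩
    · have hmin : min (((1 + s) / d) ^ 2) ((s / d) ^ 2) = (s / d) ^ 2 := by
        apply min_eq_right
        have hb : s / d ≤ (1 + s) / d := by gcongr; linarith
        exact pow_le_pow_left₀ (by positivity) hb 2
      rw [hmin, ← hs2]
      have h1 : ((1 + s) / d) ^ 2 + 1 / s ^ 2 * (s / d) ^ 2 = 1 := by
        field_simp
        linear_combination (-1 : ℝ) * hd2
      rw [h1]
    · rw [hγ]
      have hα2 : 1 - ((1 + s) / d) ^ 2 = (1 / d) ^ 2 := by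
        field_simp
        linear_combination hd2
      rw [hα2, Real.sqrt_sq (div_nonneg zero_le_one hd0.le)]
      rw [if_neg]
      · have hb1 : (s / d) ^ 2 < 1 := by
          have hlt : s / d < 1 := (div_lt_one hd0).mpr hsd
          nlinarith [div_nonneg hs0.le hd0.le]
        rw [eq_div_iff (ne_of_gt (by linarith : (0:ℝ) < 1 - (s / d) ^ 2))]
        field_simp
        linear_combination (-s) * hd2
      · push_neg
        have he : (1 + s) / d / (1 + 1 / d) = (1 + s) / (d + 1) := by
          rw [div_div]
          congr 1
          field_simp
        rw [he, div_lt_div_iff₀ hd0 (by linarith)]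
        nlinarith
  · -- lower bound
    rintro y ⟨α, β, h0a, h0b, hcon, rfl⟩
    rw [hγ]
    have hmin0 : 0 ≤ min (α ^ 2) (β ^ 2) := le_min (sq_nonneg _) (sq_nonneg _)
    have h1t : 0 < 1 / t := by positivity
    have hα1 : α ^ 2 ≤ 1 := by nlinarith [mul_nonneg h1t.le hmin0]
    have hα1' : α ≤ 1 := by nlinarith
    set c := Real.sqrt (1 - α ^ 2) with hcdef
    have hc0 : 0 ≤ c := Real.sqrt_nonneg _
    have hc2 : c ^ 2 = 1 - α ^ 2 := Real.sq_sqrt (by linarith)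
    clear_value c
    have hc1 : c ≤ 1 := by nlinarith
    have h1s : (0:ℝ) < 1 + s := by linarith
    split_ifs with hbr
    · -- first branch : show 1/(1+s) ≤ c
      rw [div_le_iff₀ h1s]
      have h1c : (0:ℝ) < 1 + c := by linarith
      have hlb : α ^ 2 / (1 + c) ^ 2 ≤ min (α ^ 2) (β ^ 2) := by
        apply le_min
        · rw [div_le_iff₀ (by positivity)]
          nlinarith [sq_nonneg α]
        · have h0 : 0 ≤ α / (1 + c) := by positivity
          have h2 : (α / (1 + c)) ^ 2 ≤ β ^ 2 := pow_le_pow_left₀ h0 hbr 2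
          rwa [div_pow] at h2
      have hkey : α ^ 2 + (1 / t) * (α ^ 2 / (1 + c) ^ 2) ≤ 1 := by
        have hm := mul_le_mul_of_nonneg_left hlb h1t.le
        linarith [hm, hcon]
      have ht2 : 0 < t * (1 + c) ^ 2 := by positivity
      have hkey' : α ^ 2 * (t * (1 + c) ^ 2) + α ^ 2 ≤ t * (1 + c) ^ 2 := by
        have e : α ^ 2 + (1 / t) * (α ^ 2 / (1 + c) ^ 2)
            = (α ^ 2 * (t * (1 + c) ^ 2) + α ^ 2) / (t * (1 + c) ^ 2) := by
          field_simp
        rwa [e, div_le_one ht2] at hkey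
      have hα2' : α ^ 2 = 1 - c ^ 2 := by linarith
      rw [hα2', ← hs2] at hkey'
      -- now : (1-c²)(s²(1+c)²) + (1-c²) ≤ s²(1+c)² ⊢ 1 ≤ c(1+s)
      by_contra hg
      push_neg at hg
      have h1 : 1 - c ^ 2 ≤ (c * s) ^ 2 * (1 + c) ^ 2 := by nlinarith [hkey']
      have hcs : c * s < 1 - c := by nlinarith
      have h2 : (c * s) ^ 2 < (1 - c) ^ 2 := by nlinarith [mul_nonneg hc0 hs0.le]
      have h3 : (c * s) ^ 2 * (1 + c) ^ 2 < (1 - c) ^ 2 * (1 + c) ^ 2 :=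
        mul_lt_mul_of_pos_right h2 (by positivity)
      have hb : (1 - c ^ 2) ^ 2 ≤ 1 - c ^ 2 := by
        nlinarith [mul_nonneg (sq_nonneg c) (show (0:ℝ) ≤ 1 - c ^ 2 by nlinarith)]
      nlinarith [h1, h3, hb]
    · -- second branch
      push_neg at hbr
      have h1c : (0:ℝ) < 1 + c := by linarith
      have hβα : β < α := by
        have h := (lt_div_iff₀ h1c).mp hbr
        nlinarith [mul_nonneg h0b hc0]
      have hβ1 : β < 1 := lt_of_lt_of_le hβα hα1'
      have hmin : min (α ^ 2) (β ^ 2) = β ^ 2 :=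
        min_eq_right (pow_le_pow_left₀ h0b hβα.le 2)
      rw [hmin] at hcon
      have hslack : s ^ 2 * α ^ 2 + β ^ 2 ≤ s ^ 2 := by
        have h := mul_le_mul_of_nonneg_left hcon ht0.le
        have e : t * (α ^ 2 + 1 / t * β ^ 2) = t * α ^ 2 + β ^ 2 := by
          field_simp
        rw [e, mul_one] at h
        nlinarith [hs2]
      have hden : (0:ℝ) < 1 - β ^ 2 := by nlinarith
      rw [div_le_div_iff₀ h1s hden]
      have hX0 : 0 ≤ 2 * (1 + s) * α * β := by positivity
      have hY0 : 0 < s + (2 + s) * β ^ 2 := by positivity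
      have hsq : (2 * (1 + s) * α * β) ^ 2 ≤ (s + (2 + s) * β ^ 2) ^ 2 := by
        nlinarith [sq_nonneg ((s ^ 2 + 2 * s + 2) * β ^ 2 - s ^ 2),
          mul_nonneg (mul_nonneg (sq_nonneg (1 + s)) (sq_nonneg β))
            (by linarith : (0:ℝ) ≤ s ^ 2 - β ^ 2 - s ^ 2 * α ^ 2),
          mul_pos hs0 hs0]
      have hXY : 2 * (1 + s) * α * β ≤ s + (2 + s) * β ^ 2 := by
        nlinarith [hsq, hX0, hY0,
          sq_nonneg (2 * (1 + s) * α * β - (s + (2 + s) * β ^ 2))]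
      nlinarith [hXY]
end

section
/- For 0 < t ≤ 1, the minimum of (1 − 2αβ + β²)/(1 − β²) over α, β ≥ 0 with β < 1 subject to α² + β²/t ≤ 1 equals 1/(1 + √t). -/
set_option maxHeartbeats 1000000 in


/-- for `0 < t ≤ 1`, the minimum of `(1 − 2αβ + β²)/(1 − β²)` over
`α, β ≥ 0`, `β < 1`, subject to `α² + β²/t ≤ 1`, equals `1/(1 + √t)`. -/
theorem min_second_branch (t : ℝ) (ht0 : 0 < t) (ht1 : t ≤ 1) :
    IsLeast {y : ℝ | ∃ α β : ℝ, 0 ≤ α ∧ 0 ≤ β ∧ β < 1 ∧ α ^ 2 + β ^ 2 / t ≤ 1 ∧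
      y = (1 - 2 * α * β + β ^ 2) / (1 - β ^ 2)} (1 / (1 + Real.sqrt t)) := by
  set r := Real.sqrt t with hrdef
  have hr : 0 < r := Real.sqrt_pos.mpr ht0
  have hr2 : r ^ 2 = t := Real.sq_sqrt ht0.le
  set s := Real.sqrt (r ^ 2 + 2 * r + 2) with hsdef
  have hDpos : (0:ℝ) < r ^ 2 + 2 * r + 2 := by positivity
  have hs : s ^ 2 = r ^ 2 + 2 * r + 2 := Real.sq_sqrt hDpos.le
  have hspos : 0 < s := Real.sqrt_pos.mpr hDpos
  have hss : s * s = r ^ 2 + 2 * r + 2 := by rw [← hs]; ring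
  constructor
  · refine ⟨(1 + r) / s, r / s, by positivity, by positivity, ?_, ?_, ?_⟩
    · rw [div_lt_one hspos]
      nlinarith [hs, hr]
    · rw [div_pow, div_pow, hs, ← hr2]
      rw [div_div]
      rw [div_add_div _ _ (by positivity) (by positivity)]
      rw [div_le_one (by positivity)]
      ring_nf
      nlinarith [hr]
    · rw [div_pow, hs]
      have h1 : (1:ℝ) - r ^ 2 / (r ^ 2 + 2 * r + 2) = (2 * r + 2) / (r ^ 2 + 2 * r + 2) := by
        field_simp; ring
      have h2 : (1:ℝ) - 2 * ((1 + r) / s) * (r / s) + r ^ 2 / (r ^ 2 + 2 * r + 2) =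
          2 / (r ^ 2 + 2 * r + 2) := by
        field_simp
        rw [hs]; ring
      rw [h1, h2]
      rw [div_div_div_eq]
      rw [div_eq_div_iff (by positivity) (by positivity)]
      ring
  · rintro y ⟨α, β, hα, hβ, hβ1, hcon, hy⟩
    have hden : 0 < 1 - β ^ 2 := by nlinarith
    have key : r ^ 2 * α ^ 2 ≤ r ^ 2 - β ^ 2 := by
      have := mul_le_mul_of_nonneg_left hcon ht0.le
      rw [mul_add, mul_div_cancel₀ _ ht0.ne'] at this
      nlinarith [hr2]
    have h1 : (2 * (1 + r) * α * β) ^ 2 * r ^ 2 = 4 * (1 + r) ^ 2 * β ^ 2 * (r ^ 2 * α ^ 2) := by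
      ring
    have h2 : 4 * (1 + r) ^ 2 * β ^ 2 * (r ^ 2 * α ^ 2) ≤
        4 * (1 + r) ^ 2 * β ^ 2 * (r ^ 2 - β ^ 2) :=
      mul_le_mul_of_nonneg_left key (by positivity)
    have h3 : 4 * (1 + r) ^ 2 * β ^ 2 * (r ^ 2 - β ^ 2) ≤
        (r + (2 + r) * β ^ 2) ^ 2 * r ^ 2 := by
      nlinarith [sq_nonneg (r ^ 2 - (r ^ 2 + 2 * r + 2) * β ^ 2)]
    have hA2 : (2 * (1 + r) * α * β) ^ 2 ≤ (r + (2 + r) * β ^ 2) ^ 2 :=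
      le_of_mul_le_mul_right (by linarith) (by positivity : (0:ℝ) < r ^ 2)
    have hAnn : (0:ℝ) ≤ 2 * (1 + r) * α * β := by positivity
    have hBpos : (0:ℝ) < r + (2 + r) * β ^ 2 := by positivity
    have main : 2 * (1 + r) * α * β ≤ r + (2 + r) * β ^ 2 := by
      nlinarith [hA2, hAnn, hBpos]
    rw [hy, div_le_div_iff₀ (by positivity) hden]
    nlinarith [main]
end

section
/- Given 0 ≤ α < 1 and β ≥ 0, define γ_{α,β}(t) = α·(t/β) + √(1−α²)·√(1 − t²/β²) for 0 ≤ t ≤ αβ. Then sup over t ≥ 0 of (1 + γ_{α,β}(t))/(2t + 1 − γ_{α,β}(t)) (where γ_{α,β}(t) is only required to take the given form for t ≤ αβ and the supremum is over that range appropriately) equals (1+√(1−α²))/(1−√(1−α²)) if β ≥ α/(1+√(1−α²)), and equals (1−αβ)/(β(α−β)) if β ≤ α/(1+√(1−α²)). -/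
set_option maxHeartbeats 1000000


/-- maximization of `(1 + γ(t))/(2t + 1 − γ(t))` over the arc
`γ(t) = α·(t/β) + √(1−α²)·√(1 − t²/β²)`, `0 ≤ t ≤ αβ`, with the two cases
depending on the position of `β` relative to `α/(1+√(1−α²))`. -/
theorem max_ratio_along_arc (α β : ℝ) (hα0 : 0 < α) (hα1 : α < 1) (hβ0 : 0 < β)
    (γ : ℝ → ℝ)
    (hγ : ∀ t : ℝ, 0 ≤ t → t ≤ α * β →
      γ t = α * (t / β) + Real.sqrt (1 - α ^ 2) * Real.sqrt (1 - t ^ 2 / β ^ 2)) :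
    (α / (1 + Real.sqrt (1 - α ^ 2)) ≤ β →
      IsGreatest {y : ℝ | ∃ t : ℝ, 0 ≤ t ∧ t ≤ α * β ∧
          y = (1 + γ t) / (2 * t + 1 - γ t)}
        ((1 + Real.sqrt (1 - α ^ 2)) / (1 - Real.sqrt (1 - α ^ 2)))) ∧
    (β ≤ α / (1 + Real.sqrt (1 - α ^ 2)) → β < α →
      IsGreatest {y : ℝ | ∃ t : ℝ, 0 ≤ t ∧ t ≤ α * β ∧
          y = (1 + γ t) / (2 * t + 1 - γ t)}
        ((1 - α * β) / (β * (α - β)))) := by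
  have hα2 : (0:ℝ) < 1 - α ^ 2 := by nlinarith
  set s := Real.sqrt (1 - α ^ 2) with hsdef
  have hs2 : s ^ 2 = 1 - α ^ 2 := Real.sq_sqrt hα2.le
  have hs0 : 0 < s := Real.sqrt_pos.mpr hα2
  have hs1 : s < 1 := by nlinarith
  -- decompose any admissible t
  have main : ∀ t : ℝ, 0 ≤ t → t ≤ α * β →
      ∃ u w : ℝ, t = β * u ∧ 0 ≤ u ∧ u ≤ α ∧ 0 ≤ w ∧ w ^ 2 = 1 - u ^ 2 ∧
        γ t = α * u + s * w ∧ 0 < 2 * t + 1 - γ t := by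
    intro t ht0 ht1
    have hu0 : 0 ≤ t / β := by positivity
    have hu1 : t / β ≤ α := by rw [div_le_iff₀ hβ0]; linarith [ht1]
    have h1u : (0:ℝ) ≤ 1 - (t / β) ^ 2 := by nlinarith
    have hw2 : (Real.sqrt (1 - (t / β) ^ 2)) ^ 2 = 1 - (t / β) ^ 2 :=
      Real.sq_sqrt h1u
    have hw0 : 0 ≤ Real.sqrt (1 - (t / β) ^ 2) := Real.sqrt_nonneg _
    have hγeq : γ t = α * (t / β) + s * Real.sqrt (1 - (t / β) ^ 2) := by
      rw [hγ t ht0 ht1]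
      congr 2
      rw [div_pow]
    refine ⟨t / β, Real.sqrt (1 - (t / β) ^ 2), by field_simp, hu0, hu1, hw0, hw2, hγeq, ?_⟩
    -- positivity of the denominator
    have hγle : γ t ≤ 1 := by
      rw [hγeq]
      nlinarith [sq_nonneg (α * Real.sqrt (1 - (t / β) ^ 2) - s * (t / β)),
        mul_nonneg (mul_nonneg hα0.le hu0) (mul_nonneg hs0.le hw0)]
    rcases eq_or_lt_of_le ht0 with h | h
    · have ht : t = 0 := h.symm
      subst ht
      have : γ 0 = s := by
        rw [hγeq]; norm_num
      rw [this]; linarith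
    · linarith
  constructor
  · -- case 1 : β ≥ α/(1+s)
    intro hcase
    have hcase' : α ≤ β * (1 + s) := by
      rw [div_le_iff₀ (by positivity)] at hcase; linarith [hcase]
    constructor
    · -- membership at t = 0
      refine ⟨0, le_rfl, by positivity, ?_⟩
      have h0 : γ 0 = s := by
        rw [hγ 0 le_rfl (by positivity)]
        norm_num
      rw [h0]; norm_num
    · intro y hy
      obtain ⟨t, ht0, ht1, hy⟩ := hy
      obtain ⟨u, w, htu, hu0, hu1, hw0, hw2, hγeq, hden⟩ := main t ht0 ht1
      have hw1 : w ≤ 1 := by nlinarith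
      rw [hy, div_le_div_iff₀ hden (by linarith : (0:ℝ) < 1 - s)]
      rw [hγeq, htu]
      nlinarith [mul_nonneg (sub_nonneg.mpr hcase') hu0, mul_nonneg hs0.le (sub_nonneg.mpr hw1)]
  · -- case 2 : β ≤ α/(1+s), β < α
    intro hcase hβα
    have hβ1 : β < 1 := hβα.trans hα1
    have hcase' : β * (1 + s) ≤ α := by
      rw [le_div_iff₀ (by positivity)] at hcase; linarith [hcase]
    have hA : (0:ℝ) < 1 - 2 * α * β + β ^ 2 := by nlinarith
    have hαβ1 : α * β < 1 := by nlinarith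
    -- positivity of P = α(1+β²) - 2β
    have hfac1 : α * β ≤ 1 - s := by
      have h1 : α * β * (1 + s) ≤ (1 - s) * (1 + s) := by nlinarith
      have h2 : (0:ℝ) < 1 + s := by linarith
      nlinarith [h1, h2]
    have hP : 0 ≤ α * (1 + β ^ 2) - 2 * β := by
      have h1 : 0 ≤ (1 - s - α * β) * (1 + s - α * β) := by
        apply mul_nonneg <;> nlinarith
      nlinarith [h1]
    have hMden : (0:ℝ) < β * (α - β) := mul_pos hβ0 (by linarith)
    -- tangency identity
    have hid : (α * (1 + β ^ 2) - 2 * β) ^ 2 + (s * (1 - β ^ 2)) ^ 2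
        = (1 - 2 * α * β + β ^ 2) ^ 2 := by
      linear_combination (1 - β ^ 2) ^ 2 * hs2
    constructor
    · -- membership at t₀ = β * (P / A)
      have ht₀0 : 0 ≤ β * ((α * (1 + β ^ 2) - 2 * β) / (1 - 2 * α * β + β ^ 2)) :=
        mul_nonneg hβ0.le (div_nonneg hP hA.le)
      have ht₀1 : β * ((α * (1 + β ^ 2) - 2 * β) / (1 - 2 * α * β + β ^ 2)) ≤ α * β := by
        have h1 : (α * (1 + β ^ 2) - 2 * β) / (1 - 2 * α * β + β ^ 2) ≤ α := by
          rw [div_le_iff₀ hA]; nlinarith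
        calc β * ((α * (1 + β ^ 2) - 2 * β) / (1 - 2 * α * β + β ^ 2)) ≤ β * α :=
              mul_le_mul_of_nonneg_left h1 hβ0.le
          _ = α * β := mul_comm β α
      refine ⟨_, ht₀0, ht₀1, ?_⟩
      obtain ⟨u, w, htu, hu0, hu1, hw0, hw2, hγeq, hden⟩ := main _ ht₀0 ht₀1
      have hAne : (1 - 2 * α * β + β ^ 2) ≠ 0 := ne_of_gt hA
      have hu : (β * ((α * (1 + β ^ 2) - 2 * β) / (1 - 2 * α * β + β ^ 2))) / β
          = (α * (1 + β ^ 2) - 2 * β) / (1 - 2 * α * β + β ^ 2) :=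
        mul_div_cancel_left₀ _ (ne_of_gt hβ0)
      have hAne2 : ((1 - 2 * α * β + β ^ 2) : ℝ) ^ 2 ≠ 0 := pow_ne_zero 2 (ne_of_gt hA)
      have h1 : (β * ((α * (1 + β ^ 2) - 2 * β) / (1 - 2 * α * β + β ^ 2))) ^ 2 / β ^ 2
          = ((α * (1 + β ^ 2) - 2 * β) / (1 - 2 * α * β + β ^ 2)) ^ 2 := by
        rw [mul_pow]
        exact mul_div_cancel_left₀ _ (pow_ne_zero 2 (ne_of_gt hβ0))
      have hval : 1 - (β * ((α * (1 + β ^ 2) - 2 * β) / (1 - 2 * α * β + β ^ 2))) ^ 2 / β ^ 2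
          = (s * (1 - β ^ 2) / (1 - 2 * α * β + β ^ 2)) ^ 2 := by
        rw [h1, div_pow, div_pow, eq_div_iff hAne2, sub_mul, one_mul,
          div_mul_cancel₀ _ hAne2]
        linarith [hid]
      have hsq : Real.sqrt (1 - (β * ((α * (1 + β ^ 2) - 2 * β) / (1 - 2 * α * β + β ^ 2))) ^ 2 / β ^ 2)
          = s * (1 - β ^ 2) / (1 - 2 * α * β + β ^ 2) := by
        rw [hval, Real.sqrt_sq (div_nonneg (mul_nonneg hs0.le (by nlinarith)) hA.le)]
      have hγt : γ (β * ((α * (1 + β ^ 2) - 2 * β) / (1 - 2 * α * β + β ^ 2)))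
          = α * ((α * (1 + β ^ 2) - 2 * β) / (1 - 2 * α * β + β ^ 2))
            + (1 - α ^ 2) * ((1 - β ^ 2) / (1 - 2 * α * β + β ^ 2)) := by
        rw [hγ _ ht₀0 ht₀1, hu, hsq, ← hs2]; ring
      rw [hγt] at hden ⊢
      rw [eq_div_iff (ne_of_gt hden)]
      rw [div_mul_eq_mul_div, div_eq_iff (ne_of_gt hMden)]
      have hAne' : (1 - α * β * 2 + β ^ 2 : ℝ) ≠ 0 := by
        rw [show (1 - α * β * 2 + β ^ 2 : ℝ) = 1 - 2 * α * β + β ^ 2 by ring]; exact hAne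
      field_simp
      ring
    · intro y hy
      obtain ⟨t, ht0, ht1, hy⟩ := hy
      obtain ⟨u, w, htu, hu0, hu1, hw0, hw2, hγeq, hden⟩ := main t ht0 ht1
      have huw : u ^ 2 + w ^ 2 = 1 := by linarith [hw2]
      have hkey : (α * (1 + β ^ 2) - 2 * β) * u + (s * (1 - β ^ 2)) * w
          ≤ 1 - 2 * α * β + β ^ 2 := by
        nlinarith [sq_nonneg ((α * (1 + β ^ 2) - 2 * β) * w - (s * (1 - β ^ 2)) * u), hid, huw, hA,
          sq_nonneg ((α * (1 + β ^ 2) - 2 * β) * u + (s * (1 - β ^ 2)) * w - (1 - 2 * α * β + β ^ 2)),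
          sq_nonneg ((α * (1 + β ^ 2) - 2 * β) * u + (s * (1 - β ^ 2)) * w + (1 - 2 * α * β + β ^ 2))]
      rw [hy, div_le_div_iff₀ hden hMden]
      rw [hγeq, htu]
      nlinarith [hkey]
end
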